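/- arXiv:1205.6502 — 5 statements merged into one kernel-verified Lean document; each statement's English description precedes it below -/
import Mathlib

section
/- Let γ=(γ1,γ2) be a weight and δ=γ1+γ2. Every vector quasi-homogeneous polynomial Q=(Q1,Q2) of generalized degree k≥0 can be written uniquely in the form Q = (−∂I/∂x2, ∂I/∂x1) + J·E_γ, where I is a quasi-homogeneous polynomial of g.d. k+δ and J is a quasi-homogeneous polynomial of g.d. k; moreover J = div(Q)/(k+δ). -/
open MvPolynomial

/-- A planar polynomial vector field `P = (P1, P2)` applied to a polynomial `f`:
`P(f) = P1·∂f/∂x1 + P2·∂f/∂x2`. -/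
noncomputable def applyVF (P : MvPolynomial (Fin 2) ℝ × MvPolynomial (Fin 2) ℝ)
    (f : MvPolynomial (Fin 2) ℝ) : MvPolynomial (Fin 2) ℝ :=
  P.1 * pderiv 0 f + P.2 * pderiv 1 f

/-- The Lie bracket of two planar polynomial vector fields:
`[P,Q] = (P(Q1) − Q(P1), P(Q2) − Q(P2))`. -/
noncomputable def lieVF (P Q : MvPolynomial (Fin 2) ℝ × MvPolynomial (Fin 2) ℝ) :
    MvPolynomial (Fin 2) ℝ × MvPolynomial (Fin 2) ℝ :=
  (applyVF P Q.1 - applyVF Q P.1, applyVF P Q.2 - applyVF Q P.2)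

/-- The Euler vector field `E_γ = (γ1·x1, γ2·x2)`. -/
noncomputable def eulerVF (γ1 γ2 : ℕ) : MvPolynomial (Fin 2) ℝ × MvPolynomial (Fin 2) ℝ :=
  ((γ1 : ℝ) • X 0, (γ2 : ℝ) • X 1)

/-- The Hamiltonian vector field `(−∂H/∂x2, ∂H/∂x1)` of a polynomial `H`. -/
noncomputable def hamVF (H : MvPolynomial (Fin 2) ℝ) :
    MvPolynomial (Fin 2) ℝ × MvPolynomial (Fin 2) ℝ :=
  (-(pderiv 1 H), pderiv 0 H)

/-- Multiplication of a planar vector field by a scalar polynomial. -/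
noncomputable def smulVF (J : MvPolynomial (Fin 2) ℝ)
    (P : MvPolynomial (Fin 2) ℝ × MvPolynomial (Fin 2) ℝ) :
    MvPolynomial (Fin 2) ℝ × MvPolynomial (Fin 2) ℝ :=
  (J * P.1, J * P.2)

/-- The divergence `∂P1/∂x1 + ∂P2/∂x2` of a planar polynomial vector field. -/
noncomputable def divVF (P : MvPolynomial (Fin 2) ℝ × MvPolynomial (Fin 2) ℝ) :
    MvPolynomial (Fin 2) ℝ :=
  pderiv 0 P.1 + pderiv 1 P.2

private lemma X_mul_pderiv_monomial' (i : Fin 2) (s : Fin 2 →₀ ℕ) (a : ℝ) :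
    (X i : MvPolynomial (Fin 2) ℝ) * pderiv i (monomial s a) = C ((s i : ℝ)) * monomial s a := by
  rw [pderiv_monomial]
  rcases Nat.eq_zero_or_pos (s i) with h | h
  · simp [h]
  · have hle : Finsupp.single i 1 ≤ s := Finsupp.single_le_iff.mpr h
    have hX : (X i : MvPolynomial (Fin 2) ℝ) = monomial (Finsupp.single i 1) 1 := by
      rw [← X_pow_eq_monomial, pow_one]
    rw [hX, monomial_mul, one_mul, add_comm, tsub_add_cancel_of_le hle, C_mul_monomial]
    ring_nf

private lemma weight_two (w : Fin 2 → ℕ) (s : Fin 2 →₀ ℕ) :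
    Finsupp.weight w s = s 0 * w 0 + s 1 * w 1 := by
  rw [Finsupp.weight_apply, Finsupp.sum_fintype _ _ (by simp), Fin.sum_univ_two]
  simp [smul_eq_mul]

private lemma euler_id {w : Fin 2 → ℕ} {f : MvPolynomial (Fin 2) ℝ} {d : ℕ}
    (hf : f.IsWeightedHomogeneous w d) :
    C ((w 0 : ℝ)) * (X 0 * pderiv 0 f) + C ((w 1 : ℝ)) * (X 1 * pderiv 1 f)
      = C ((d : ℝ)) * f := by
  conv_lhs => rw [f.as_sum]
  conv_rhs => rw [f.as_sum]
  rw [map_sum (pderiv 0), map_sum (pderiv 1)]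
  simp only [Finset.mul_sum, ← Finset.sum_add_distrib]
  refine Finset.sum_congr rfl fun s hs => ?_
  rw [X_mul_pderiv_monomial', X_mul_pderiv_monomial']
  have hw : (d : ℕ) = s 0 * w 0 + s 1 * w 1 := by
    rw [← hf (mem_support_iff.mp hs), weight_two]
  have hd : (C ((d:ℝ)) : MvPolynomial (Fin 2) ℝ)
      = C ((w 0 : ℝ)) * C ((s 0 : ℝ)) + C ((w 1 : ℝ)) * C ((s 1 : ℝ)) := by
    rw [← C_mul, ← C_mul, ← C_add]
    exact congrArg C (by rw [hw]; push_cast; ring)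
  linear_combination -(monomial s (coeff s f)) * hd

private lemma pderiv_isWH {w : Fin 2 → ℕ} {f : MvPolynomial (Fin 2) ℝ} {d : ℕ} (i : Fin 2)
    (hf : f.IsWeightedHomogeneous w (d + w i)) :
    (pderiv i f).IsWeightedHomogeneous w d := by
  conv_lhs => rw [f.as_sum]
  rw [map_sum (pderiv i)]
  apply MvPolynomial.IsWeightedHomogeneous.sum
  intro s hs
  rw [pderiv_monomial]
  rcases Nat.eq_zero_or_pos (s i) with h | h
  · simp only [h, Nat.cast_zero, mul_zero, monomial_zero]
    exact isWeightedHomogeneous_zero _ _ _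
  · apply isWeightedHomogeneous_monomial
    have hle : Finsupp.single i 1 ≤ s := Finsupp.single_le_iff.mpr h
    have hadd : s - Finsupp.single i 1 + Finsupp.single i 1 = s := tsub_add_cancel_of_le hle
    have hws : Finsupp.weight w s = d + w i := hf (mem_support_iff.mp hs)
    have hw2 := congrArg (Finsupp.weight w) hadd
    rw [map_add, hws] at hw2
    have hsingle : Finsupp.weight w (Finsupp.single i 1) = w i := by
      rw [Finsupp.weight_apply, Finsupp.sum_single_index] <;> simp
    rw [hsingle] at hw2
    omega

private lemma pderiv_comm' (i j : Fin 2) (f : MvPolynomial (Fin 2) ℝ) :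
    pderiv i (pderiv j f) = pderiv j (pderiv i f) := by
  rcases eq_or_ne i j with rfl | hij
  · rfl
  · induction f using MvPolynomial.induction_on' with
    | add p q hp hq => simp [map_add, hp, hq]
    | monomial s a =>
        simp only [pderiv_monomial]
        have h1 : ((s - Finsupp.single j 1 : Fin 2 →₀ ℕ)) i = s i := by
          simp [Finsupp.tsub_apply, Finsupp.single_eq_of_ne hij]
        have h2 : ((s - Finsupp.single i 1 : Fin 2 →₀ ℕ)) j = s j := by
          simp [Finsupp.tsub_apply, Finsupp.single_eq_of_ne hij.symm]
        rw [h1, h2, tsub_tsub, tsub_tsub, add_comm]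
        congr 1
        ring

private lemma isWH_cast {w : Fin 2 → ℕ} {p : MvPolynomial (Fin 2) ℝ} {m n : ℕ}
    (h : p.IsWeightedHomogeneous w m) (e : m = n) : p.IsWeightedHomogeneous w n := e ▸ h

/-- **Lemma 1, Euler decomposition.** Every vector quasi-homogeneous polynomial
`Q = (Q1,Q2)` of generalized degree `k ≥ 0` can be written uniquely as
`Q = (−∂I/∂x2, ∂I/∂x1) + J·E_γ` with `I` quasi-homogeneous of g.d. `k+δ` and `J`
quasi-homogeneous of g.d. `k`; moreover `(k+δ)·J = div Q`, i.e. `J = div(Q)/(k+δ)`. -/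
theorem euler_decomposition (γ1 γ2 : ℕ) (hγ1 : 0 < γ1) (hγ2 : 0 < γ2)
    (hcop : Nat.Coprime γ1 γ2) (k : ℕ)
    (Q : MvPolynomial (Fin 2) ℝ × MvPolynomial (Fin 2) ℝ)
    (hQ1 : Q.1.IsWeightedHomogeneous ![γ1, γ2] (k + γ1))
    (hQ2 : Q.2.IsWeightedHomogeneous ![γ1, γ2] (k + γ2)) :
    (∃! IJ : MvPolynomial (Fin 2) ℝ × MvPolynomial (Fin 2) ℝ,
      IJ.1.IsWeightedHomogeneous ![γ1, γ2] (k + (γ1 + γ2)) ∧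
      IJ.2.IsWeightedHomogeneous ![γ1, γ2] k ∧
      Q = hamVF IJ.1 + smulVF IJ.2 (eulerVF γ1 γ2)) ∧
    (∀ I J : MvPolynomial (Fin 2) ℝ,
      I.IsWeightedHomogeneous ![γ1, γ2] (k + (γ1 + γ2)) →
      J.IsWeightedHomogeneous ![γ1, γ2] k →
      Q = hamVF I + smulVF J (eulerVF γ1 γ2) →
      ((k + (γ1 + γ2) : ℕ) : ℝ) • J = divVF Q) := by
  have h01 : (0 : Fin 2) ≠ 1 := by decide
  have h10 : (1 : Fin 2) ≠ 0 := by decide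
  set c : ℝ := ((k + (γ1 + γ2) : ℕ) : ℝ) with hc
  have hcne : c ≠ 0 := by
    rw [hc]; exact Nat.cast_ne_zero.mpr (by omega)
  have hC : (C c : MvPolynomial (Fin 2) ℝ) ≠ 0 := C_ne_zero.mpr hcne
  have hone : (C c : MvPolynomial (Fin 2) ℝ) * C c⁻¹ = 1 := by
    rw [← C_mul, mul_inv_cancel₀ hcne, C_1]
  set A : MvPolynomial (Fin 2) ℝ := C (γ1:ℝ) * (X 0 * Q.2) - C (γ2:ℝ) * (X 1 * Q.1) with hA_def
  set D : MvPolynomial (Fin 2) ℝ := pderiv 0 Q.1 + pderiv 1 Q.2 with hD_def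
  set I0 : MvPolynomial (Fin 2) ℝ := C c⁻¹ * A with hI0_def
  set J0 : MvPolynomial (Fin 2) ℝ := C c⁻¹ * D with hJ0_def
  -- homogeneity facts
  have hAh : A.IsWeightedHomogeneous ![γ1, γ2] (k + (γ1 + γ2)) := by
    rw [hA_def, ← mem_weightedHomogeneousSubmodule]
    apply Submodule.sub_mem
    · rw [mem_weightedHomogeneousSubmodule]
      exact isWH_cast ((isWeightedHomogeneous_C _ _).mul
        ((isWeightedHomogeneous_X ℝ _ 0).mul hQ2))
        (by simp only [Matrix.cons_val_zero, zero_add]; omega)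
    · rw [mem_weightedHomogeneousSubmodule]
      exact isWH_cast ((isWeightedHomogeneous_C _ _).mul
        ((isWeightedHomogeneous_X ℝ _ 1).mul hQ1))
        (by simp only [Matrix.cons_val_one, Matrix.head_cons, Matrix.cons_val_fin_one, zero_add]; omega)
  have hDh : D.IsWeightedHomogeneous ![γ1, γ2] k := by
    rw [hD_def]
    exact (pderiv_isWH 0 (isWH_cast hQ1 (by simp))).add
      (pderiv_isWH 1 (isWH_cast hQ2 (by simp)))
  have hI0h : I0.IsWeightedHomogeneous ![γ1, γ2] (k + (γ1 + γ2)) :=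
    isWH_cast ((isWeightedHomogeneous_C _ _).mul hAh) (zero_add _)
  have hJ0h : J0.IsWeightedHomogeneous ![γ1, γ2] k :=
    isWH_cast ((isWeightedHomogeneous_C _ _).mul hDh) (zero_add _)
  -- Euler identities for the components of Q
  have hE1 := euler_id hQ1
  have hE2 := euler_id hQ2
  simp only [Matrix.cons_val_zero, Matrix.cons_val_one, Matrix.head_cons] at hE1 hE2
  have hc1 : (C c : MvPolynomial (Fin 2) ℝ) = C (((k + γ1 : ℕ) : ℝ)) + C ((γ2:ℝ)) := by
    rw [← C_add]; exact congrArg C (by rw [hc]; push_cast; ring)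
  have hc2 : (C c : MvPolynomial (Fin 2) ℝ) = C (((k + γ2 : ℕ) : ℝ)) + C ((γ1:ℝ)) := by
    rw [← C_add]; exact congrArg C (by rw [hc]; push_cast; ring)
  have hck : (C c : MvPolynomial (Fin 2) ℝ) = C ((k:ℝ)) + C ((γ1:ℝ)) + C ((γ2:ℝ)) := by
    rw [← C_add, ← C_add]; exact congrArg C (by rw [hc]; push_cast; ring)
  -- key computational identities for existence
  have hB1 : C c * Q.1 = -(pderiv 1 A) + C (γ1:ℝ) * X 0 * D := by
    rw [hA_def, hD_def]
    simp only [map_sub, pderiv_mul, pderiv_C_mul, pderiv_X_of_ne h01, pderiv_X_of_ne h10,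
      pderiv_X_self, pderiv_C, mul_zero, zero_mul, add_zero, zero_add, mul_one, one_mul]
    linear_combination -hE1 + Q.1 * hc1
  have hB2 : C c * Q.2 = pderiv 0 A + C (γ2:ℝ) * X 1 * D := by
    rw [hA_def, hD_def]
    simp only [map_sub, pderiv_mul, pderiv_C_mul, pderiv_X_of_ne h01, pderiv_X_of_ne h10,
      pderiv_X_self, pderiv_C, mul_zero, zero_mul, add_zero, zero_add, mul_one, one_mul]
    linear_combination -hE2 + Q.2 * hc2
  -- (I0, J0) is a valid decomposition
  have hdecomp : Q = hamVF I0 + smulVF J0 (eulerVF γ1 γ2) := by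
    have e1 : Q.1 = -(pderiv 1 I0) + J0 * ((γ1:ℝ) • X 0) := by
      rw [hI0_def, hJ0_def, pderiv_C_mul, smul_eq_C_mul]
      linear_combination (C c⁻¹ : MvPolynomial (Fin 2) ℝ) * hB1 - Q.1 * hone
    have e2 : Q.2 = pderiv 0 I0 + J0 * ((γ2:ℝ) • X 1) := by
      rw [hI0_def, hJ0_def, pderiv_C_mul, smul_eq_C_mul]
      linear_combination (C c⁻¹ : MvPolynomial (Fin 2) ℝ) * hB2 - Q.2 * hone
    rw [Prod.ext_iff]
    exact ⟨e1, e2⟩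
  -- master lemma: any decomposition determines I and J
  have key : ∀ I J : MvPolynomial (Fin 2) ℝ,
      I.IsWeightedHomogeneous ![γ1, γ2] (k + (γ1 + γ2)) →
      J.IsWeightedHomogeneous ![γ1, γ2] k →
      Q = hamVF I + smulVF J (eulerVF γ1 γ2) →
      C c * J = D ∧ C c * I = A := by
    intro I J hI hJ hQeq
    have h1 : Q.1 = -(pderiv 1 I) + J * (C (γ1:ℝ) * X 0) := by
      rw [hQeq]
      show -(pderiv 1 I) + J * ((γ1:ℝ) • X 0) = _
      rw [smul_eq_C_mul]
    have h2 : Q.2 = pderiv 0 I + J * (C (γ2:ℝ) * X 1) := by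
      rw [hQeq]
      show pderiv 0 I + J * ((γ2:ℝ) • X 1) = _
      rw [smul_eq_C_mul]
    have hEJ := euler_id hJ
    have hEI := euler_id hI
    simp only [Matrix.cons_val_zero, Matrix.cons_val_one, Matrix.head_cons] at hEJ hEI
    rw [← hc] at hEI
    constructor
    · rw [hD_def, h1, h2]
      simp only [map_add, map_neg, pderiv_mul, pderiv_C_mul, pderiv_X_of_ne h01,
        pderiv_X_of_ne h10, pderiv_X_self, pderiv_C, mul_zero, zero_mul, add_zero, zero_add, mul_one,
        one_mul]
      have hcomm := pderiv_comm' 0 1 I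
      linear_combination hcomm - hEJ + J * hck
    · rw [hA_def, h1, h2]
      linear_combination -hEI
  constructor
  · refine ⟨(I0, J0), ⟨hI0h, hJ0h, hdecomp⟩, ?_⟩
    rintro ⟨I, J⟩ ⟨hI, hJ, hQeq⟩
    obtain ⟨e1, e2⟩ := key I J hI hJ hQeq
    obtain ⟨f1, f2⟩ := key I0 J0 hI0h hJ0h hdecomp
    have hJeq : J = J0 := mul_left_cancel₀ hC (e1.trans f1.symm)
    have hIeq : I = I0 := mul_left_cancel₀ hC (e2.trans f2.symm)
    rw [Prod.ext_iff]
    exact ⟨hIeq, hJeq⟩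
  · intro I J hI hJ hQeq
    rw [smul_eq_C_mul]
    exact (key I J hI hJ hQeq).1
end

section
/- Let γ=(γ1,γ2) be a weight, δ=γ1+γ2, let H be a quasi-homogeneous polynomial of generalized degree χ+δ (χ≥0), set 𝓗=(−∂H/∂x2, ∂H/∂x1), and let J be a quasi-homogeneous polynomial of g.d. k≥0 with 𝓗(J)=0. Then [𝓗, J·E_γ] = −χ·J·𝓗, i.e., the quasi-homogeneous polynomial K of g.d. k+χ+δ with [𝓗, J·E_γ]=(−∂K/∂x2, ∂K/∂x1) satisfies (−∂K/∂x2, ∂K/∂x1) = −χ·J·𝓗, and moreover 𝓗(K)=0. -/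
open MvPolynomial

private lemma euler2 (w : Fin 2 → ℕ) (n : ℕ) (f : MvPolynomial (Fin 2) ℝ)
    (hf : f.IsWeightedHomogeneous w n) :
    (w 0 : ℝ) • (X 0 * pderiv 0 f) + (w 1 : ℝ) • (X 1 * pderiv 1 f) = (n : ℝ) • f := by
  have key : ∀ (i : Fin 2) (d : Fin 2 →₀ ℕ) (c : ℝ),
      X i * pderiv i (monomial d c) = (d i : ℝ) • monomial d c := by
    intro i d c
    rw [pderiv_monomial]
    by_cases h : d i = 0
    · simp [h]
    · have hd : Finsupp.single i 1 + (d - Finsupp.single i 1) = d := by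
        ext j
        simp only [Finsupp.add_apply, Finsupp.tsub_apply, Finsupp.single_apply]
        rcases eq_or_ne i j with rfl | hne
        · simp; omega
        · simp [hne]
      rw [X, monomial_mul, hd, one_mul, smul_monomial, smul_eq_mul, mul_comm]
  conv_lhs => rw [f.as_sum]
  conv_rhs => rw [f.as_sum]
  rw [map_sum, map_sum, Finset.mul_sum, Finset.mul_sum, Finset.smul_sum, Finset.smul_sum,
    Finset.smul_sum, ← Finset.sum_add_distrib]
  refine Finset.sum_congr rfl fun d hd => ?_
  rw [key, key, smul_smul, smul_smul, ← add_smul]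
  congr 1
  have hwd := hf (MvPolynomial.mem_support_iff.mp hd)
  have hw : d 0 * w 0 + d 1 * w 1 = n := by
    rw [← hwd, Finsupp.weight_apply, Finsupp.sum_fintype _ _ (by simp), Fin.sum_univ_two]
    simp [mul_comm]
  push_cast [← hw]
  ring

/-- **Lemma 2, part 1, special case.** Let `γ=(γ1,γ2)` be a weight, `δ=γ1+γ2`,
`H` quasi-homogeneous of g.d. `χ+δ`, `𝓗 = (−∂H/∂x2, ∂H/∂x1)`, and `J` quasi-homogeneous of
g.d. `k` with `𝓗(J) = 0`. Then `[𝓗, J·E_γ] = −χ·J·𝓗`; that is, the quasi-homogeneous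
polynomial `K` of g.d. `k+χ+δ` with `[𝓗, J·E_γ] = (−∂K/∂x2, ∂K/∂x1)` satisfies
`(−∂K/∂x2, ∂K/∂x1) = −χ·J·𝓗`, and moreover `𝓗(K) = 0`. -/
theorem lie_ham_smul_euler_integral (γ1 γ2 : ℕ) (hγ1 : 0 < γ1) (hγ2 : 0 < γ2)
    (hcop : Nat.Coprime γ1 γ2) (χ k : ℕ)
    (H : MvPolynomial (Fin 2) ℝ)
    (hH : H.IsWeightedHomogeneous ![γ1, γ2] (χ + (γ1 + γ2)))
    (J : MvPolynomial (Fin 2) ℝ) (hJ : J.IsWeightedHomogeneous ![γ1, γ2] k)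
    (hint : applyVF (hamVF H) J = 0)
    (K : MvPolynomial (Fin 2) ℝ)
    (hK : K.IsWeightedHomogeneous ![γ1, γ2] (k + χ + (γ1 + γ2)))
    (hKeq : lieVF (hamVF H) (smulVF J (eulerVF γ1 γ2)) = hamVF K) :
    lieVF (hamVF H) (smulVF J (eulerVF γ1 γ2)) = (-(χ : ℝ)) • smulVF J (hamVF H) ∧
    hamVF K = (-(χ : ℝ)) • smulVF J (hamVF H) ∧
    applyVF (hamVF H) K = 0 := by

  have ne10 : (1 : Fin 2) ≠ 0 := by decide
  have ne01 : (0 : Fin 2) ≠ 1 := by decide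
  have eH := euler2 ![γ1, γ2] _ H hH
  simp only [Matrix.cons_val_zero, Matrix.cons_val_one, Matrix.head_cons,
    smul_eq_C_mul] at eH
  push_cast at eH
  simp only [map_add] at eH
  have d0H := congrArg (⇑(pderiv (0 : Fin 2))) eH
  have d1H := congrArg (⇑(pderiv (1 : Fin 2))) eH
  simp only [map_add, pderiv_C_mul, pderiv_mul, pderiv_X_self, pderiv_X_of_ne ne10,
    pderiv_X_of_ne ne01, pderiv_C, zero_mul, mul_zero, add_zero, zero_add, mul_one, one_mul] at d0H d1H
  simp only [applyVF, hamVF] at hint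
  have pc := pderiv_comm' (0 : Fin 2) (1 : Fin 2) H
  have eq1 : lieVF (hamVF H) (smulVF J (eulerVF γ1 γ2)) =
      (-(χ : ℝ)) • smulVF J (hamVF H) := by
    simp only [lieVF, applyVF, smulVF, eulerVF, hamVF, Prod.smul_mk, smul_eq_C_mul, map_neg,
      pderiv_mul, pderiv_C_mul, pderiv_X_self, pderiv_X_of_ne ne10, pderiv_X_of_ne ne01, pderiv_C, Prod.mk.injEq]
    constructor
    · linear_combination J * d1H + C (γ1 : ℝ) * X 0 * hint + C (γ1 : ℝ) * J * X 0 * pc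
    · linear_combination -J * d0H + C (γ2 : ℝ) * X 1 * hint + C (γ2 : ℝ) * J * X 1 * pc
  refine ⟨eq1, hKeq ▸ eq1, ?_⟩
  have hK2 := hKeq.symm.trans eq1
  have h1 := congrArg Prod.fst hK2
  have h2 := congrArg Prod.snd hK2
  simp only [hamVF, smulVF, Prod.smul_mk, smul_eq_C_mul, map_neg] at h1 h2
  simp only [applyVF, hamVF]
  linear_combination (-(pderiv 0 H)) * h1 + (-(pderiv 1 H)) * h2
end

section
/- Let γ=(γ1,γ2) be a weight, δ=γ1+γ2, let H be a nonzero quasi-homogeneous polynomial of generalized degree χ+δ with χ≥1, and set 𝓗=(−∂H/∂x2, ∂H/∂x1). Given any quasi-homogeneous polynomial K of g.d. k+χ+δ (k≥0) such that 𝓗(K)=0, there exists a unique quasi-homogeneous polynomial J of g.d. k such that 𝓗(J)=0 and [𝓗, J·E_γ] = (−∂K/∂x2, ∂K/∂x1). -/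
open MvPolynomial

namespace StatementAux
noncomputable section


noncomputable section

abbrev R2 : Type := MvPolynomial (Fin 2) ℝ

def wd (γ1 γ2 : ℕ) (σ : Fin 2 →₀ ℕ) : ℕ := σ 0 * γ1 + σ 1 * γ2

variable {γ1 γ2 : ℕ}

lemma wd_add (σ τ : Fin 2 →₀ ℕ) : wd γ1 γ2 (σ + τ) = wd γ1 γ2 σ + wd γ1 γ2 τ := by
  simp [wd, Finsupp.add_apply]; ring

lemma weight_apply_two (σ : Fin 2 →₀ ℕ) :
    (Finsupp.weight ![γ1, γ2]) σ = wd γ1 γ2 σ := by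
  rw [Finsupp.weight_apply, Finsupp.sum_fintype]
  · simp [Fin.sum_univ_two, wd]
  · intro i; simp

lemma wh_iff {P : R2} {m : ℕ} :
    P.IsWeightedHomogeneous ![γ1, γ2] m ↔
      ∀ σ ∈ P.support, wd γ1 γ2 σ = m := by
  constructor
  · intro h σ hσ
    rw [← weight_apply_two σ]
    exact h (mem_support_iff.mp hσ)
  · intro h d hd
    rw [weight_apply_two]
    exact h d (mem_support_iff.mpr hd)

/-- choice of an extremal exponent (max version) -/
lemma exists_extremal_max (A : R2) (hA : A ≠ 0) :
    ∃ σ ∈ A.support, (∀ u ∈ A.support, wd γ1 γ2 u ≤ wd γ1 γ2 σ) ∧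
      (∀ u ∈ A.support, wd γ1 γ2 u = wd γ1 γ2 σ → u 0 ≤ σ 0) := by
  have hne : A.support.Nonempty := support_nonempty.mpr hA
  have hne1 : (A.support.image (wd γ1 γ2)).Nonempty := hne.image _
  set M1 := (A.support.image (wd γ1 γ2)).max' hne1 with hM1
  have hT : (A.support.filter (fun u => wd γ1 γ2 u = M1)).Nonempty := by
    obtain ⟨u, hu, hu2⟩ := Finset.mem_image.mp ((A.support.image (wd γ1 γ2)).max'_mem hne1)
    exact ⟨u, Finset.mem_filter.mpr ⟨hu, hu2⟩⟩
  have hne2 : ((A.support.filter (fun u => wd γ1 γ2 u = M1)).image (fun u => u 0)).Nonempty :=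
    hT.image _
  obtain ⟨σ, hσ, hσ2⟩ := Finset.mem_image.mp
    (((A.support.filter (fun u => wd γ1 γ2 u = M1)).image (fun u => u 0)).max'_mem hne2)
  rw [Finset.mem_filter] at hσ
  refine ⟨σ, hσ.1, ?_, ?_⟩
  · intro u hu
    rw [hσ.2]
    exact Finset.le_max' _ _ (Finset.mem_image_of_mem _ hu)
  · intro u hu hwd
    rw [hσ2]
    apply Finset.le_max'
    exact Finset.mem_image_of_mem _ (Finset.mem_filter.mpr ⟨hu, by rw [hwd, hσ.2]⟩)

lemma exists_extremal_min (A : R2) (hA : A ≠ 0) :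
    ∃ σ ∈ A.support, (∀ u ∈ A.support, wd γ1 γ2 σ ≤ wd γ1 γ2 u) ∧
      (∀ u ∈ A.support, wd γ1 γ2 u = wd γ1 γ2 σ → σ 0 ≤ u 0) := by
  have hne : A.support.Nonempty := support_nonempty.mpr hA
  have hne1 : (A.support.image (wd γ1 γ2)).Nonempty := hne.image _
  set M1 := (A.support.image (wd γ1 γ2)).min' hne1 with hM1
  have hT : (A.support.filter (fun u => wd γ1 γ2 u = M1)).Nonempty := by
    obtain ⟨u, hu, hu2⟩ := Finset.mem_image.mp ((A.support.image (wd γ1 γ2)).min'_mem hne1)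
    exact ⟨u, Finset.mem_filter.mpr ⟨hu, hu2⟩⟩
  have hne2 : ((A.support.filter (fun u => wd γ1 γ2 u = M1)).image (fun u => u 0)).Nonempty :=
    hT.image _
  obtain ⟨σ, hσ, hσ2⟩ := Finset.mem_image.mp
    (((A.support.filter (fun u => wd γ1 γ2 u = M1)).image (fun u => u 0)).min'_mem hne2)
  rw [Finset.mem_filter] at hσ
  refine ⟨σ, hσ.1, ?_, ?_⟩
  · intro u hu
    rw [hσ.2]
    exact Finset.min'_le _ _ (Finset.mem_image_of_mem _ hu)
  · intro u hu hwd
    rw [hσ2]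
    apply Finset.min'_le
    exact Finset.mem_image_of_mem _ (Finset.mem_filter.mpr ⟨hu, by rw [hwd, hσ.2]⟩)

end


lemma fin2_eq {u σ : Fin 2 →₀ ℕ} (h0 : u 0 = σ 0) (h1 : u 1 = σ 1) : u = σ := by
  ext i
  fin_cases i
  · exact h0
  · exact h1

lemma eq_of_wd_eq (hγ2 : 0 < γ2) {u σ : Fin 2 →₀ ℕ} (h0 : u 0 = σ 0)
    (hw : wd γ1 γ2 u = wd γ1 γ2 σ) : u = σ := by
  refine fin2_eq h0 ?_
  unfold wd at hw
  rw [h0] at hw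
  have : u 1 * γ2 = σ 1 * γ2 := by omega
  exact Nat.eq_of_mul_eq_mul_right hγ2 this

lemma coeff_mul_extremal (hγ2 : 0 < γ2) (A B : R2) {σ τ : Fin 2 →₀ ℕ}
    (hσA : σ ∈ A.support) (hτB : τ ∈ B.support)
    (h : ∀ u ∈ A.support, ∀ v ∈ B.support, u + v = σ + τ → u = σ ∧ v = τ) :
    coeff (σ + τ) (A * B) = coeff σ A * coeff τ B := by
  rw [coeff_mul]
  apply Finset.sum_eq_single_of_mem (σ, τ) (Finset.HasAntidiagonal.mem_antidiagonal.mpr rfl)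
  rintro ⟨u, v⟩ huv hne
  rw [Finset.HasAntidiagonal.mem_antidiagonal] at huv
  by_contra h0
  have hu : u ∈ A.support := mem_support_iff.mpr (left_ne_zero_of_mul h0)
  have hv : v ∈ B.support := mem_support_iff.mpr (right_ne_zero_of_mul h0)
  obtain ⟨h1, h2⟩ := h u hu v hv huv
  exact hne (by rw [h1, h2])


theorem wh_factor (hγ2 : 0 < γ2) {A B : R2} (hA : A ≠ 0) (hB : B ≠ 0) {m : ℕ}
    (hAB : (A * B).IsWeightedHomogeneous ![γ1, γ2] m) :
    ∃ a b : ℕ, a + b = m ∧ A.IsWeightedHomogeneous ![γ1, γ2] a ∧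
      B.IsWeightedHomogeneous ![γ1, γ2] b := by
  obtain ⟨σM, hσM, hσM1, hσM2⟩ := exists_extremal_max (γ1 := γ1) (γ2 := γ2) A hA
  obtain ⟨τM, hτM, hτM1, hτM2⟩ := exists_extremal_max (γ1 := γ1) (γ2 := γ2) B hB
  obtain ⟨σm, hσm, hσm1, hσm2⟩ := exists_extremal_min (γ1 := γ1) (γ2 := γ2) A hA
  obtain ⟨τm, hτm, hτm1, hτm2⟩ := exists_extremal_min (γ1 := γ1) (γ2 := γ2) B hB
  have keyM : ∀ u ∈ A.support, ∀ v ∈ B.support, u + v = σM + τM → u = σM ∧ v = τM := by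
    intro u hu v hv huv
    have hw : wd γ1 γ2 u + wd γ1 γ2 v = wd γ1 γ2 σM + wd γ1 γ2 τM := by
      rw [← wd_add, ← wd_add, huv]
    have h1 : wd γ1 γ2 u ≤ wd γ1 γ2 σM := hσM1 u hu
    have h2 : wd γ1 γ2 v ≤ wd γ1 γ2 τM := hτM1 v hv
    have e1 : wd γ1 γ2 u = wd γ1 γ2 σM := by omega
    have e2 : wd γ1 γ2 v = wd γ1 γ2 τM := by omega
    have h0 : u 0 + v 0 = σM 0 + τM 0 := by
      have := congrFun (congrArg (fun f : Fin 2 →₀ ℕ => (f : Fin 2 → ℕ)) huv) 0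
      simpa using this
    have h3 : u 0 ≤ σM 0 := hσM2 u hu e1
    have h4 : v 0 ≤ τM 0 := hτM2 v hv e2
    exact ⟨eq_of_wd_eq hγ2 (by omega) e1, eq_of_wd_eq hγ2 (by omega) e2⟩
  have keym : ∀ u ∈ A.support, ∀ v ∈ B.support, u + v = σm + τm → u = σm ∧ v = τm := by
    intro u hu v hv huv
    have hw : wd γ1 γ2 u + wd γ1 γ2 v = wd γ1 γ2 σm + wd γ1 γ2 τm := by
      rw [← wd_add, ← wd_add, huv]
    have h1 : wd γ1 γ2 σm ≤ wd γ1 γ2 u := hσm1 u hu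
    have h2 : wd γ1 γ2 τm ≤ wd γ1 γ2 v := hτm1 v hv
    have e1 : wd γ1 γ2 u = wd γ1 γ2 σm := by omega
    have e2 : wd γ1 γ2 v = wd γ1 γ2 τm := by omega
    have h0 : u 0 + v 0 = σm 0 + τm 0 := by
      have := congrFun (congrArg (fun f : Fin 2 →₀ ℕ => (f : Fin 2 → ℕ)) huv) 0
      simpa using this
    have h3 : σm 0 ≤ u 0 := hσm2 u hu e1
    have h4 : τm 0 ≤ v 0 := hτm2 v hv e2
    exact ⟨eq_of_wd_eq hγ2 (by omega) e1, eq_of_wd_eq hγ2 (by omega) e2⟩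
  have hcM : coeff (σM + τM) (A * B) ≠ 0 := by
    rw [coeff_mul_extremal hγ2 A B hσM hτM keyM]
    exact mul_ne_zero (mem_support_iff.mp hσM) (mem_support_iff.mp hτM)
  have hcm : coeff (σm + τm) (A * B) ≠ 0 := by
    rw [coeff_mul_extremal hγ2 A B hσm hτm keym]
    exact mul_ne_zero (mem_support_iff.mp hσm) (mem_support_iff.mp hτm)
  have hM : Finsupp.weight ![γ1, γ2] (σM + τM) = m := hAB hcM
  have hm' : Finsupp.weight ![γ1, γ2] (σm + τm) = m := hAB hcm
  rw [weight_apply_two, wd_add] at hM hm'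
  have hAle : wd γ1 γ2 σm ≤ wd γ1 γ2 σM := hσm1 σM hσM
  have hBle : wd γ1 γ2 τm ≤ wd γ1 γ2 τM := hτm1 τM hτM
  refine ⟨wd γ1 γ2 σM, wd γ1 γ2 τM, hM, ?_, ?_⟩
  · rw [wh_iff]
    intro u hu
    have := hσM1 u hu
    have := hσm1 u hu
    omega
  · rw [wh_iff]
    intro v hv
    have := hτM1 v hv
    have := hτm1 v hv
    omega


def Pb (F G : R2) : R2 :=
  pderiv 0 F * pderiv 1 G - pderiv 1 F * pderiv 0 G

lemma X_mul_pderiv_monomial (i : Fin 2) (σ : Fin 2 →₀ ℕ) (c : ℝ) :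
    X i * pderiv i (monomial σ c) = monomial σ ((σ i : ℝ) * c) := by
  rw [pderiv_monomial]
  by_cases h : σ i = 0
  · simp [h]
  · rw [X, monomial_mul]
    have : Finsupp.single i 1 + (σ - Finsupp.single i 1) = σ := by
      ext j
      by_cases hj : j = i
      · subst hj; simp [Finsupp.single_apply]; omega
      · simp [Finsupp.single_apply, Ne.symm hj]
    rw [this]
    ring_nf

lemma euler {P : R2} {m : ℕ} (hP : P.IsWeightedHomogeneous ![γ1, γ2] m) :
    C (γ1 : ℝ) * (X 0 * pderiv 0 P) + C (γ2 : ℝ) * (X 1 * pderiv 1 P) = C (m : ℝ) * P := by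
  conv_lhs => rw [P.as_sum]
  conv_rhs => rw [P.as_sum]
  rw [map_sum (pderiv 0), map_sum (pderiv 1)]
  simp only [Finset.mul_sum, ← Finset.sum_add_distrib]
  apply Finset.sum_congr rfl
  intro σ hσ
  have hw : σ 0 * γ1 + σ 1 * γ2 = m := wh_iff.mp hP σ hσ
  rw [X_mul_pderiv_monomial, X_mul_pderiv_monomial, C_mul_monomial, C_mul_monomial,
    C_mul_monomial, ← map_add]
  congr 1
  push_cast [← hw]
  ring

lemma pderiv_comm (i j : Fin 2) (P : R2) :
    pderiv i (pderiv j P) = pderiv j (pderiv i P) := by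
  induction P using MvPolynomial.induction_on' with
  | add p q hp hq => simp only [map_add, hp, hq]
  | monomial σ a =>
    rcases eq_or_ne i j with rfl | hij
    · rfl
    · rw [pderiv_monomial, pderiv_monomial, pderiv_monomial, pderiv_monomial]
      have hexp : σ - Finsupp.single j 1 - Finsupp.single i 1
          = σ - Finsupp.single i 1 - Finsupp.single j 1 := by
        ext l
        simp only [Finsupp.tsub_apply, Finsupp.single_apply]
        split_ifs <;> omega
      have h1 : ((σ - Finsupp.single j 1 : Fin 2 →₀ ℕ)) i = σ i := by
        simp [Finsupp.tsub_apply, Finsupp.single_apply, Ne.symm hij]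
      have h2 : ((σ - Finsupp.single i 1 : Fin 2 →₀ ℕ)) j = σ j := by
        simp [Finsupp.tsub_apply, Finsupp.single_apply, hij]
      rw [hexp, h1, h2]
      congr 1
      ring

lemma euler_dy {P : R2} {m : ℕ} (hP : P.IsWeightedHomogeneous ![γ1, γ2] m) :
    C (γ1 : ℝ) * (X 0 * pderiv 0 (pderiv 1 P)) + C (γ2 : ℝ) * (X 1 * pderiv 1 (pderiv 1 P))
      = (C (m : ℝ) - C (γ2 : ℝ)) * pderiv 1 P := by
  have h := congrArg (pderiv 1) (euler hP)
  simp only [map_add, pderiv_C_mul, pderiv_mul, pderiv_C, pderiv_X_self,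
    pderiv_X_of_ne (show (0 : Fin 2) ≠ 1 by decide), zero_mul, mul_one, zero_add, zero_mul, mul_zero] at h
  rw [pderiv_comm 1 0 P] at h
  linear_combination h

lemma euler_dx {P : R2} {m : ℕ} (hP : P.IsWeightedHomogeneous ![γ1, γ2] m) :
    C (γ1 : ℝ) * (X 0 * pderiv 0 (pderiv 0 P)) + C (γ2 : ℝ) * (X 1 * pderiv 1 (pderiv 0 P))
      = (C (m : ℝ) - C (γ1 : ℝ)) * pderiv 0 P := by
  have h := congrArg (pderiv 0) (euler hP)
  simp only [map_add, pderiv_C_mul, pderiv_mul, pderiv_C, pderiv_X_self,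
    pderiv_X_of_ne (show (1 : Fin 2) ≠ 0 by decide), zero_mul, mul_one, zero_add, zero_mul, mul_zero] at h
  rw [pderiv_comm 0 1 P] at h
  linear_combination h

lemma contract_x {F G : R2} {f g : ℕ} (hF : F.IsWeightedHomogeneous ![γ1, γ2] f)
    (hG : G.IsWeightedHomogeneous ![γ1, γ2] g) :
    C (γ1 : ℝ) * X 0 * Pb F G
      = C (f : ℝ) * F * pderiv 1 G - C (g : ℝ) * G * pderiv 1 F := by
  unfold Pb
  linear_combination pderiv 1 G * euler hF - pderiv 1 F * euler hG

lemma contract_y {F G : R2} {f g : ℕ} (hF : F.IsWeightedHomogeneous ![γ1, γ2] f)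
    (hG : G.IsWeightedHomogeneous ![γ1, γ2] g) :
    C (γ2 : ℝ) * X 1 * Pb F G
      = C (g : ℝ) * G * pderiv 0 F - C (f : ℝ) * F * pderiv 0 G := by
  unfold Pb
  linear_combination pderiv 0 F * euler hG - pderiv 0 G * euler hF


lemma wh_pderiv_0 (hγ1 : 0 < γ1) {P : R2} {m : ℕ} (hP : P.IsWeightedHomogeneous ![γ1, γ2] m) :
    (pderiv 0 P).IsWeightedHomogeneous ![γ1, γ2] (m - γ1) := by
  conv => rw [P.as_sum]
  rw [map_sum (pderiv 0)]
  apply IsWeightedHomogeneous.sum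
  intro σ hσ
  rw [pderiv_monomial]
  by_cases h : σ 0 = 0
  · rw [h]; simp only [Nat.cast_zero, mul_zero, map_zero]
    exact isWeightedHomogeneous_zero _ _ _
  · apply isWeightedHomogeneous_monomial
    rw [weight_apply_two]
    have hw : σ 0 * γ1 + σ 1 * γ2 = m := wh_iff.mp hP σ hσ
    have h0 : ((σ - Finsupp.single 0 1 : Fin 2 →₀ ℕ)) 0 = σ 0 - 1 := by
      simp [Finsupp.single_apply]
    have h1 : ((σ - Finsupp.single 0 1 : Fin 2 →₀ ℕ)) 1 = σ 1 := by
      simp [Finsupp.single_apply]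
    unfold wd
    obtain ⟨t, ht⟩ : ∃ t, σ 0 = t + 1 := ⟨σ 0 - 1, by omega⟩
    rw [h0, h1, ht]
    have hw' : t * γ1 + γ1 + σ 1 * γ2 = m := by rw [← hw, ht]; ring
    have e1 : (t + 1 - 1) * γ1 = t * γ1 := by norm_num
    rw [e1]
    exact Nat.eq_sub_of_add_eq (by linarith)

lemma wh_pderiv_1 (hγ2 : 0 < γ2) {P : R2} {m : ℕ} (hP : P.IsWeightedHomogeneous ![γ1, γ2] m) :
    (pderiv 1 P).IsWeightedHomogeneous ![γ1, γ2] (m - γ2) := by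
  conv => rw [P.as_sum]
  rw [map_sum (pderiv 1)]
  apply IsWeightedHomogeneous.sum
  intro σ hσ
  rw [pderiv_monomial]
  by_cases h : σ 1 = 0
  · rw [h]; simp only [Nat.cast_zero, mul_zero, map_zero]
    exact isWeightedHomogeneous_zero _ _ _
  · apply isWeightedHomogeneous_monomial
    rw [weight_apply_two]
    have hw : σ 0 * γ1 + σ 1 * γ2 = m := wh_iff.mp hP σ hσ
    have h0 : ((σ - Finsupp.single 1 1 : Fin 2 →₀ ℕ)) 0 = σ 0 := by
      simp [Finsupp.single_apply]
    have h1 : ((σ - Finsupp.single 1 1 : Fin 2 →₀ ℕ)) 1 = σ 1 - 1 := by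
      simp [Finsupp.single_apply]
    unfold wd
    obtain ⟨t, ht⟩ : ∃ t, σ 1 = t + 1 := ⟨σ 1 - 1, by omega⟩
    rw [h0, h1, ht]
    have hw' : σ 0 * γ1 + (t * γ2 + γ2) = m := by rw [← hw, ht]; ring
    have e1 : (t + 1 - 1) * γ2 = t * γ2 := by norm_num
    rw [e1]
    exact Nat.eq_sub_of_add_eq (by linarith)

lemma wh_zero_eq_C (hγ1 : 0 < γ1) (hγ2 : 0 < γ2) {P : R2}
    (hP : P.IsWeightedHomogeneous ![γ1, γ2] 0) : P = C (coeff 0 P) := by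
  apply MvPolynomial.ext
  intro σ
  by_cases h : σ = 0
  · subst h; simp
  · rw [coeff_C, if_neg (Ne.symm h)]
    by_contra hc
    have hσ : σ ∈ P.support := mem_support_iff.mpr hc
    have hww := wh_iff.mp hP σ hσ
    unfold wd at hww
    have hz := Nat.add_eq_zero.mp hww
    have h00 : σ 0 = 0 := by
      rcases Nat.mul_eq_zero.mp hz.1 with h' | h'
      · exact h'
      · omega
    have h11 : σ 1 = 0 := by
      rcases Nat.mul_eq_zero.mp hz.2 with h' | h'
      · exact h'
      · omega
    apply h
    apply fin2_eq
    · simpa using h00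
    · simpa using h11

lemma wh_zero_not_prime (hγ1 : 0 < γ1) (hγ2 : 0 < γ2) {P : R2}
    (hP : P.IsWeightedHomogeneous ![γ1, γ2] 0) : ¬ Prime P := by
  intro hpr
  have hC := wh_zero_eq_C hγ1 hγ2 hP
  by_cases h : coeff 0 P = 0
  · rw [h, map_zero] at hC
    exact hpr.ne_zero hC
  · apply hpr.not_unit
    rw [hC]
    exact (isUnit_iff_ne_zero.mpr h).map C

lemma dvd_wh_le (hγ2 : 0 < γ2) {P W : R2} {g m : ℕ} (hW : W ≠ 0)
    (hP : P.IsWeightedHomogeneous ![γ1, γ2] g) (hWwh : W.IsWeightedHomogeneous ![γ1, γ2] m)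
    (hdvd : P ∣ W) : g ≤ m := by
  obtain ⟨T, rfl⟩ := hdvd
  have hPne : P ≠ 0 := left_ne_zero_of_mul hW
  have hTne : T ≠ 0 := right_ne_zero_of_mul hW
  obtain ⟨a, b, hab, hPa, _⟩ := wh_factor hγ2 hPne hTne hWwh
  have : a = g := IsWeightedHomogeneous.inj_right hPne hPa hP
  omega

lemma prime_contradiction (hγ1 : 0 < γ1) (hγ2 : 0 < γ2) {P : R2} {g : ℕ} (hP : Prime P)
    (hwh : P.IsWeightedHomogeneous ![γ1, γ2] g) (hx : P ∣ pderiv 0 P) (hy : P ∣ pderiv 1 P) :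
    False := by
  have hg0 : g = 0 := by
    by_cases h0 : pderiv 0 P = 0
    · by_cases h1 : pderiv 1 P = 0
      · have he := euler hwh
        rw [h0, h1] at he
        simp only [mul_zero, add_zero] at he
        have : C (g : ℝ) * P = 0 := he.symm
        rcases mul_eq_zero.mp this with h | h
        · have : (g : ℝ) = 0 := by
            by_contra hne
            exact (C_ne_zero.mpr hne) h
          exact_mod_cast this
        · exact absurd h hP.ne_zero
      · have := dvd_wh_le hγ2 h1 hwh (wh_pderiv_1 hγ2 hwh) hy
        omega
    · have := dvd_wh_le hγ2 h0 hwh (wh_pderiv_0 hγ1 hwh) hx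
      omega
  subst hg0
  exact wh_zero_not_prime hγ1 hγ2 hwh hP

lemma wh_pow {P : R2} {g : ℕ} (hP : P.IsWeightedHomogeneous ![γ1, γ2] g) (n : ℕ) :
    (P ^ n).IsWeightedHomogeneous ![γ1, γ2] (n * g) := by
  induction n with
  | zero => simpa using isWeightedHomogeneous_one ℝ ![γ1, γ2]
  | succ n ih =>
    rw [pow_succ]
    have := ih.mul hP
    rwa [show n * g + g = (n+1) * g by ring] at this

lemma dvd_of_forall_emult {a b : R2} (ha : a ≠ 0) (hb : b ≠ 0)
    (h : ∀ p : R2, Prime p → emultiplicity p a ≤ emultiplicity p b) : a ∣ b := by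
  classical
  letI : NormalizationMonoid R2 := UniqueFactorizationMonoid.normalizationMonoid.toNormalizationMonoid
  rw [UniqueFactorizationMonoid.dvd_iff_normalizedFactors_le_normalizedFactors ha hb,
    Multiset.le_iff_count]
  intro p
  by_cases hp : p ∈ UniqueFactorizationMonoid.normalizedFactors a
  · have hpp : Prime p := UniqueFactorizationMonoid.prime_of_normalized_factor p hp
    have h1 := UniqueFactorizationMonoid.emultiplicity_eq_count_normalizedFactors
      hpp.irreducible ha
    have h2 := UniqueFactorizationMonoid.emultiplicity_eq_count_normalizedFactors
      hpp.irreducible hb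
    have hn : normalize p = p := UniqueFactorizationMonoid.normalize_normalized_factor p hp
    rw [hn] at h1 h2
    have hle := h p hpp
    rw [h1, h2] at hle
    exact_mod_cast hle
  · simp [Multiset.count_eq_zero_of_notMem hp]


lemma pb_pow_left (P U K : R2) (a : ℕ) :
    Pb (P ^ (a + 1) * U) K
      = P ^ a * (C ((a + 1 : ℕ) : ℝ) * (U * Pb P K) + P * Pb U K) := by
  have hc : ((a + 1 : ℕ) : R2) = C ((a + 1 : ℕ) : ℝ) := (map_natCast C (a+1)).symm
  simp only [Pb, pderiv_mul, pderiv_pow, Nat.add_sub_cancel, hc]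
  ring

lemma pb_pow_both (P U V : R2) (a b : ℕ) :
    Pb (P ^ (a + 1) * U) (P ^ (b + 1) * V)
      = P ^ a * P ^ b * P *
        (C ((a + 1 : ℕ) : ℝ) * (U * Pb P V) + C ((b + 1 : ℕ) : ℝ) * (V * Pb U P) + P * Pb U V) := by
  have hca : ((a + 1 : ℕ) : R2) = C ((a + 1 : ℕ) : ℝ) := (map_natCast C (a+1)).symm
  have hcb : ((b + 1 : ℕ) : R2) = C ((b + 1 : ℕ) : ℝ) := (map_natCast C (b+1)).symm
  simp only [Pb, pderiv_mul, pderiv_pow, Nat.add_sub_cancel, hca, hcb]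
  ring

lemma core (hγ1 : 0 < γ1) (hγ2 : 0 < γ2) {P U V : R2} {g u v : ℕ} (n m : ℕ) (hP : Prime P)
    (hPwh : P.IsWeightedHomogeneous ![γ1, γ2] g) (hU : U.IsWeightedHomogeneous ![γ1, γ2] u)
    (hV : V.IsWeightedHomogeneous ![γ1, γ2] v) (hPU : ¬ P ∣ U) (hPV : ¬ P ∣ V)
    (hS : C (n : ℝ) * (U * Pb P V) + C (m : ℝ) * (V * Pb U P) + P * Pb U V = 0) :
    m * u = n * v := by
  by_contra hne
  have hc : ((m : ℝ) * u - (n : ℝ) * v) ≠ 0 := by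
    have : ((m * u : ℕ) : ℝ) ≠ ((n * v : ℕ) : ℝ) := by exact_mod_cast hne
    push_cast at this
    exact sub_ne_zero.mpr this
  have hCc : IsUnit (C ((m : ℝ) * u - (n : ℝ) * v) : R2) :=
    (isUnit_iff_ne_zero.mpr hc).map C
  have hCeq : (C ((m : ℝ) * u - (n : ℝ) * v) : R2)
      = C (m : ℝ) * C (u : ℝ) - C (n : ℝ) * C (v : ℝ) := by
    rw [map_sub, map_mul, map_mul]
  have c1 := contract_x hPwh hV
  have c2 := contract_x hU hPwh
  have hdy : (C (m : ℝ) * C (u : ℝ) - C (n : ℝ) * C (v : ℝ)) * (U * (V * pderiv 1 P))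
      = P * (C (g : ℝ) * (C (m : ℝ) * (V * pderiv 1 U) - C (n : ℝ) * (U * pderiv 1 V))
          - C (γ1 : ℝ) * X 0 * Pb U V) := by
    linear_combination (C (γ1 : ℝ) * X 0) * hS - C (n : ℝ) * U * c1 - C (m : ℝ) * V * c2
  have c3 := contract_y hPwh hV
  have c4 := contract_y hU hPwh
  have hdx : (C (m : ℝ) * C (u : ℝ) - C (n : ℝ) * C (v : ℝ)) * (U * (V * pderiv 0 P))
      = P * (C (g : ℝ) * (C (m : ℝ) * (V * pderiv 0 U) - C (n : ℝ) * (U * pderiv 0 V))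
          + C (γ2 : ℝ) * X 1 * Pb U V) := by
    linear_combination (- (C (γ2 : ℝ) * X 1)) * hS + C (n : ℝ) * U * c3 + C (m : ℝ) * V * c4
  have hPy : P ∣ pderiv 1 P := by
    have hdvd : P ∣ (C ((m : ℝ) * u - (n : ℝ) * v) : R2) * (U * (V * pderiv 1 P)) := by
      rw [hCeq, hdy]; exact Dvd.intro _ rfl
    rcases (hP.dvd_mul).mp hdvd with h | h
    · exact absurd (isUnit_of_dvd_unit h hCc) hP.not_unit
    rcases (hP.dvd_mul).mp h with h | h
    · exact absurd h hPU
    rcases (hP.dvd_mul).mp h with h | h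
    · exact absurd h hPV
    · exact h
  have hPx : P ∣ pderiv 0 P := by
    have hdvd : P ∣ (C ((m : ℝ) * u - (n : ℝ) * v) : R2) * (U * (V * pderiv 0 P)) := by
      rw [hCeq, hdx]; exact Dvd.intro _ rfl
    rcases (hP.dvd_mul).mp hdvd with h | h
    · exact absurd (isUnit_of_dvd_unit h hCc) hP.not_unit
    rcases (hP.dvd_mul).mp h with h | h
    · exact absurd h hPU
    rcases (hP.dvd_mul).mp h with h | h
    · exact absurd h hPV
    · exact h
  exact prime_contradiction hγ1 hγ2 hP hPwh hPx hPy


set_option maxHeartbeats 1000000 in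
lemma mult_le (hγ1 : 0 < γ1) (hγ2 : 0 < γ2) {H K : R2} {d e : ℕ} (hd : 1 ≤ d) (hde : d ≤ e)
    (hH : H.IsWeightedHomogeneous ![γ1, γ2] d) (hK : K.IsWeightedHomogeneous ![γ1, γ2] e)
    (hH0 : H ≠ 0) (hK0 : K ≠ 0) (hPb : Pb H K = 0) {P : R2} (hP : Prime P) :
    emultiplicity P H ≤ emultiplicity P K := by
  have finH : FiniteMultiplicity P H := FiniteMultiplicity.of_prime_left hP hH0
  have finK : FiniteMultiplicity P K := FiniteMultiplicity.of_prime_left hP hK0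
  rw [finH.emultiplicity_eq_multiplicity, finK.emultiplicity_eq_multiplicity]
  rw [Nat.cast_le]
  set n := multiplicity P H with hn
  set m := multiplicity P K with hm
  rcases Nat.eq_zero_or_pos n with hn0 | hn1
  · omega
  obtain ⟨U, hHU, hPU⟩ := finH.exists_eq_pow_mul_and_not_dvd
  obtain ⟨V, hKV, hPV⟩ := finK.exists_eq_pow_mul_and_not_dvd
  rw [← hn] at hHU
  rw [← hm] at hKV
  have hPne : P ≠ 0 := hP.ne_zero
  have hU0 : U ≠ 0 := by intro h; rw [h, mul_zero] at hHU; exact hH0 hHU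
  have hV0 : V ≠ 0 := by intro h; rw [h, mul_zero] at hKV; exact hK0 hKV
  obtain ⟨a, ha⟩ : ∃ a, n = a + 1 := ⟨n - 1, by omega⟩
  rw [hHU] at hH
  rw [ha] at hHU hH
  -- P is weighted homogeneous
  have hsplit : P ^ (a + 1) * U = P * (P ^ a * U) := by ring
  have hH' : (P * (P ^ a * U)).IsWeightedHomogeneous ![γ1, γ2] d := hsplit ▸ hH
  obtain ⟨g, r, -, hPwh, -⟩ :=
    wh_factor hγ2 hPne (mul_ne_zero (pow_ne_zero _ hPne) hU0) hH'
  -- U is weighted homogeneous, d = (a+1)*g + u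
  obtain ⟨a', u, hau, hPnwh', hUwh⟩ :=
    wh_factor hγ2 (pow_ne_zero _ hPne) hU0 hH
  have ha' : a' = (a + 1) * g :=
    IsWeightedHomogeneous.inj_right (pow_ne_zero _ hPne) hPnwh' (wh_pow hPwh (a + 1))
  have hdeq : (a + 1) * g + u = d := by omega
  rcases Nat.eq_zero_or_pos m with hm0 | hm1
  · -- m = 0 : contradiction
    exfalso
    have hVK : V = K := by rw [hKV, hm0, pow_zero, one_mul]
    have hPbHK : P ^ a * (C ((a + 1 : ℕ) : ℝ) * (U * Pb P K) + P * Pb U K) = 0 := by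
      rw [← pb_pow_left, ← hHU, hPb]
    have hS : C ((a + 1 : ℕ) : ℝ) * (U * Pb P K) + C ((0 : ℕ) : ℝ) * (K * Pb U P)
        + P * Pb U K = 0 := by
      have h0 : C ((a + 1 : ℕ) : ℝ) * (U * Pb P K) + P * Pb U K = 0 := by
        rcases mul_eq_zero.mp hPbHK with h | h
        · exact absurd h (pow_ne_zero _ hPne)
        · exact h
      rw [Nat.cast_zero, map_zero, zero_mul, add_zero]
      linear_combination h0
    have hcore := core hγ1 hγ2 (a + 1) 0 hP hPwh hUwh hK hPU (show ¬ P ∣ K by rwa [hVK] at hPV) hS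
    -- 0 * u = (a+1) * e
    have he0 : (a + 1) * e = 0 := by omega
    have : e = 0 := by
      rcases Nat.mul_eq_zero.mp he0 with h | h
      · omega
      · exact h
    omega
  obtain ⟨b, hb⟩ : ∃ b, m = b + 1 := ⟨m - 1, by omega⟩
  rw [hb] at hKV
  have hK' : (P ^ (b + 1) * V).IsWeightedHomogeneous ![γ1, γ2] e := by
    rw [← hKV]; exact hK
  -- V is weighted homogeneous, e = (b+1)*g + v
  obtain ⟨b', v, hbv, hPmwh', hVwh⟩ :=
    wh_factor hγ2 (pow_ne_zero _ hPne) hV0 hK'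
  have hb' : b' = (b + 1) * g :=
    IsWeightedHomogeneous.inj_right (pow_ne_zero _ hPne) hPmwh' (wh_pow hPwh (b + 1))
  have heeq : (b + 1) * g + v = e := by omega
  have hPbHK : P ^ a * P ^ b * P *
      (C ((a + 1 : ℕ) : ℝ) * (U * Pb P V) + C ((b + 1 : ℕ) : ℝ) * (V * Pb U P)
        + P * Pb U V) = 0 := by
    rw [← pb_pow_both, ← hHU, ← hKV, hPb]
  have hS : C ((a + 1 : ℕ) : ℝ) * (U * Pb P V) + C ((b + 1 : ℕ) : ℝ) * (V * Pb U P)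
      + P * Pb U V = 0 := by
    rcases mul_eq_zero.mp hPbHK with h | h
    · exfalso
      rcases mul_eq_zero.mp h with h' | h'
      · rcases mul_eq_zero.mp h' with h'' | h''
        · exact pow_ne_zero _ hPne h''
        · exact pow_ne_zero _ hPne h''
      · exact hPne h'
    · exact h
  have hcore := core hγ1 hγ2 (a + 1) (b + 1) hP hPwh hUwh hVwh hPU hPV hS
  -- (b+1) * u = (a+1) * v ; conclude n ≤ m
  have hmd : m * d = n * e := by
    rw [ha, hb, ← hdeq, ← heeq]
    calc (b + 1) * ((a + 1) * g + u)
        = (a + 1) * ((b + 1) * g) + (b + 1) * u := by ring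
      _ = (a + 1) * ((b + 1) * g) + (a + 1) * v := by rw [hcore]
      _ = (a + 1) * ((b + 1) * g + v) := by ring
  have hne : n * e ≤ m * e := by
    calc n * e = m * d := hmd.symm
      _ ≤ m * e := Nat.mul_le_mul_left m hde
  exact Nat.le_of_mul_le_mul_right hne (by omega)

lemma H_dvd_K (hγ1 : 0 < γ1) (hγ2 : 0 < γ2) {H K : R2} {d e : ℕ} (hd : 1 ≤ d) (hde : d ≤ e)
    (hH : H.IsWeightedHomogeneous ![γ1, γ2] d) (hK : K.IsWeightedHomogeneous ![γ1, γ2] e)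
    (hH0 : H ≠ 0) (hK0 : K ≠ 0) (hPb : Pb H K = 0) : H ∣ K := by
  apply dvd_of_forall_emult hH0 hK0
  intro p hp
  exact mult_le hγ1 hγ2 hd hde hH hK hH0 hK0 hPb hp


lemma lie_expand {H J : R2} {d : ℕ} (hH : H.IsWeightedHomogeneous ![γ1, γ2] d)
    (hPbHJ : Pb H J = 0) :
    lieVF (hamVF H) (smulVF J (eulerVF γ1 γ2)) =
      ((C (d : ℝ) - C (γ1 : ℝ) - C (γ2 : ℝ)) * (J * pderiv 1 H),
       -((C (d : ℝ) - C (γ1 : ℝ) - C (γ2 : ℝ)) * (J * pderiv 0 H))) := by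
  have hy := euler_dy hH
  have hx := euler_dx hH
  unfold Pb at hPbHJ
  unfold lieVF applyVF hamVF smulVF eulerVF
  simp only [smul_eq_C_mul, pderiv_mul, pderiv_C_mul, pderiv_C, map_neg, pderiv_X_self,
    pderiv_X_of_ne (show (1 : Fin 2) ≠ 0 by decide),
    pderiv_X_of_ne (show (0 : Fin 2) ≠ 1 by decide), mul_zero, zero_mul, mul_one,
    add_zero, zero_add, Prod.mk.injEq]
  constructor
  · linear_combination J * hy + (C (γ1 : ℝ) * X 0) * hPbHJ
  · linear_combination (- J) * hx + (C (γ2 : ℝ) * X 1) * hPbHJ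

end
end StatementAux

open StatementAux in
/-- **Lemma 2, part 2.** Let `γ=(γ1,γ2)` be a weight, `δ=γ1+γ2`, `H ≠ 0` a
quasi-homogeneous polynomial of g.d. `χ+δ` with `χ ≥ 1`, and `𝓗 = (−∂H/∂x2, ∂H/∂x1)`.
Given any quasi-homogeneous polynomial `K` of g.d. `k+χ+δ` (`k ≥ 0`) with `𝓗(K) = 0`, there
exists a unique quasi-homogeneous polynomial `J` of g.d. `k` such that `𝓗(J) = 0` and
`[𝓗, J·E_γ] = (−∂K/∂x2, ∂K/∂x1)`. -/
theorem exists_unique_integral_smul_euler (γ1 γ2 : ℕ) (hγ1 : 0 < γ1) (hγ2 : 0 < γ2)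
    (hcop : Nat.Coprime γ1 γ2) (χ k : ℕ) (hχ : 1 ≤ χ)
    (H : MvPolynomial (Fin 2) ℝ) (hH0 : H ≠ 0)
    (hH : H.IsWeightedHomogeneous ![γ1, γ2] (χ + (γ1 + γ2)))
    (K : MvPolynomial (Fin 2) ℝ)
    (hK : K.IsWeightedHomogeneous ![γ1, γ2] (k + χ + (γ1 + γ2)))
    (hKint : applyVF (hamVF H) K = 0) :
    ∃! J : MvPolynomial (Fin 2) ℝ,
      J.IsWeightedHomogeneous ![γ1, γ2] k ∧
      applyVF (hamVF H) J = 0 ∧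
      lieVF (hamVF H) (smulVF J (eulerVF γ1 γ2)) = hamVF K := by
  classical
  have hPbHK : Pb H K = 0 := by
    unfold applyVF hamVF at hKint
    unfold Pb
    linear_combination hKint
  obtain ⟨Q, hKQ, hQwh⟩ : ∃ Q : MvPolynomial (Fin 2) ℝ,
      K = H * Q ∧ Q.IsWeightedHomogeneous ![γ1, γ2] k := by
    by_cases hK0 : K = 0
    · exact ⟨0, by rw [hK0, mul_zero], isWeightedHomogeneous_zero _ _ _⟩
    · have hdvd := H_dvd_K hγ1 hγ2 (by omega : 1 ≤ χ + (γ1 + γ2))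
        (by omega : χ + (γ1 + γ2) ≤ k + χ + (γ1 + γ2)) hH hK hH0 hK0 hPbHK
      obtain ⟨Q, hQ⟩ := hdvd
      have hQ0 : Q ≠ 0 := by rintro rfl; rw [mul_zero] at hQ; exact hK0 hQ
      obtain ⟨a, b, hab, hHa, hQb⟩ := wh_factor hγ2 hH0 hQ0 (by rw [← hQ]; exact hK)
      have ha : a = χ + (γ1 + γ2) := IsWeightedHomogeneous.inj_right hH0 hHa hH
      have hb : b = k := by omega
      exact ⟨Q, hQ, hb ▸ hQb⟩
  have hPbHQ : Pb H Q = 0 := by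
    have hid : Pb H (H * Q) = H * Pb H Q := by
      unfold Pb; simp only [pderiv_mul]; ring
    have h0 : H * Pb H Q = 0 := by rw [← hid, ← hKQ]; exact hPbHK
    rcases mul_eq_zero.mp h0 with h | h
    · exact absurd h hH0
    · exact h
  have hPbHQ' : pderiv 0 H * pderiv 1 Q - pderiv 1 H * pderiv 0 Q = 0 := hPbHQ
  have eH := euler hH
  have eQ := euler hQwh
  have idQy : C ((χ + (γ1 + γ2) : ℕ) : ℝ) * (H * pderiv 1 Q)
      = C ((k : ℕ) : ℝ) * (Q * pderiv 1 H) := by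
    linear_combination (pderiv 1 H) * eQ - (pderiv 1 Q) * eH + (C (γ1 : ℝ) * X 0) * hPbHQ'
  have idQx : C ((χ + (γ1 + γ2) : ℕ) : ℝ) * (H * pderiv 0 Q)
      = C ((k : ℕ) : ℝ) * (Q * pderiv 0 H) := by
    linear_combination (pderiv 0 H) * eQ - (pderiv 0 Q) * eH - (C (γ2 : ℝ) * X 1) * hPbHQ'
  have hχR : (χ : ℝ) ≠ 0 := Nat.cast_ne_zero.mpr (by omega)
  have hdR : ((χ + (γ1 + γ2) : ℕ) : ℝ) ≠ 0 := Nat.cast_ne_zero.mpr (by omega)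
  set c : ℝ := -((k + χ + (γ1 + γ2) : ℕ) : ℝ) / ((χ : ℝ) * ((χ + (γ1 + γ2) : ℕ) : ℝ)) with hc
  have hreal : (χ : ℝ) * c * ((χ + (γ1 + γ2) : ℕ) : ℝ) = -((k + χ + (γ1 + γ2) : ℕ) : ℝ) := by
    rw [hc]; field_simp
  have hlift : (C (χ : ℝ) : MvPolynomial (Fin 2) ℝ) * C c * C ((χ + (γ1 + γ2) : ℕ) : ℝ)
      = - C ((k + χ + (γ1 + γ2) : ℕ) : ℝ) := by
    rw [← map_mul, ← map_mul, ← map_neg]; exact congrArg C hreal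
  have hsum : (C ((k + χ + (γ1 + γ2) : ℕ) : ℝ) : MvPolynomial (Fin 2) ℝ)
      = C ((χ + (γ1 + γ2) : ℕ) : ℝ) + C ((k : ℕ) : ℝ) := by
    rw [← map_add]; congr 1; push_cast; ring
  have hCχ : (C ((χ + (γ1 + γ2) : ℕ) : ℝ) : MvPolynomial (Fin 2) ℝ) - C (γ1 : ℝ) - C (γ2 : ℝ)
      = C (χ : ℝ) := by
    rw [← map_sub, ← map_sub]; congr 1; push_cast; ring
  have hCd0 : (C ((χ + (γ1 + γ2) : ℕ) : ℝ) : MvPolynomial (Fin 2) ℝ) ≠ 0 := C_ne_zero.mpr hdR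
  have hCχ0 : (C (χ : ℝ) : MvPolynomial (Fin 2) ℝ) ≠ 0 := C_ne_zero.mpr hχR
  have hPbHJ : Pb H (C c * Q) = 0 := by
    unfold Pb
    simp only [pderiv_C_mul]
    linear_combination C c * hPbHQ'
  have needy : C (χ : ℝ) * (C c * Q * pderiv 1 H) = -(pderiv 1 K) := by
    rw [hKQ]
    apply mul_left_cancel₀ hCd0
    simp only [pderiv_mul]
    linear_combination (Q * pderiv 1 H) * hlift + idQy - (Q * pderiv 1 H) * hsum
  have needx : C (χ : ℝ) * (C c * Q * pderiv 0 H) = -(pderiv 0 K) := by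
    rw [hKQ]
    apply mul_left_cancel₀ hCd0
    simp only [pderiv_mul]
    linear_combination (Q * pderiv 0 H) * hlift + idQx - (Q * pderiv 0 H) * hsum
  have hJlie : lieVF (hamVF H) (smulVF (C c * Q) (eulerVF γ1 γ2)) = hamVF K := by
    rw [lie_expand hH hPbHJ, hCχ]
    unfold hamVF
    rw [Prod.mk.injEq]
    constructor
    · linear_combination needy
    · linear_combination - needx
  refine ⟨C c * Q, ⟨?_, ?_, hJlie⟩, ?_⟩
  · have := (isWeightedHomogeneous_C ![γ1, γ2] c).mul hQwh
    rwa [zero_add] at this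
  · unfold applyVF hamVF
    have := hPbHJ
    unfold Pb at this
    linear_combination this
  · rintro J' ⟨hJ'wh, hJ'int, hJ'lie⟩
    have hPbHJ' : Pb H J' = 0 := by
      unfold applyVF hamVF at hJ'int
      unfold Pb
      linear_combination hJ'int
    rw [lie_expand hH hPbHJ', hCχ] at hJ'lie
    unfold hamVF at hJ'lie
    rw [Prod.mk.injEq] at hJ'lie
    obtain ⟨e1, e2⟩ := hJ'lie
    have hy0 : C (χ : ℝ) * ((J' - C c * Q) * pderiv 1 H) = 0 := by
      linear_combination e1 - needy
    have hx0 : C (χ : ℝ) * ((J' - C c * Q) * pderiv 0 H) = 0 := by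
      linear_combination - e2 - needx
    have hnotboth : pderiv 0 H ≠ 0 ∨ pderiv 1 H ≠ 0 := by
      by_contra hcon
      push_neg at hcon
      obtain ⟨h0, h1⟩ := hcon
      rw [h0, h1] at eH
      simp only [mul_zero, add_zero] at eH
      rcases mul_eq_zero.mp eH.symm with h | h
      · exact hCd0 h
      · exact hH0 h
    have key : ∀ D : MvPolynomial (Fin 2) ℝ, D ≠ 0 →
        C (χ : ℝ) * ((J' - C c * Q) * D) = 0 → J' = C c * Q := by
      intro D hD h
      rcases mul_eq_zero.mp h with h' | h'
      · exact absurd h' hCχ0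
      rcases mul_eq_zero.mp h' with h'' | h''
      · exact sub_eq_zero.mp h''
      · exact absurd h'' hD
    rcases hnotboth with h | h
    · exact key _ h hx0
    · exact key _ h hy0
end

section
/- Let l ≥ m ≥ 2 be integers, d = gcd(l,m), and consider the vector field 𝓗 = (±x2^{m−1}, x1^{l−1}) with Hamiltonian H = x1^l/l ∓ x2^m/m, which is quasi-homogeneous with respect to the weight γ=(m/d, l/d). Then every quasi-homogeneous polynomial P (with respect to γ) that is a polynomial integral of 𝓗, i.e. ±x2^{m−1}·∂P/∂x1 + x1^{l−1}·∂P/∂x2 = 0, is a scalar multiple of a power of H: P = c·H^r for some constant c and integer r ≥ 0. -/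
open MvPolynomial Finsupp

lemma my_coeff_pderiv (i : Fin 2) (d : Fin 2 →₀ ℕ) (P : MvPolynomial (Fin 2) ℝ) :
    coeff d (pderiv i P) = (d i + 1 : ℝ) * coeff (d + Finsupp.single i 1) P := by
  induction P using MvPolynomial.induction_on' with
  | add p q hp hq => simp [hp, hq, mul_add]
  | monomial s a =>
    rw [pderiv_monomial]
    by_cases h : s = d + Finsupp.single i 1
    · have hsi : s i = d i + 1 := by simp [h]
      have : s - Finsupp.single i 1 = d := by
        rw [h]; ext x; simp [Finsupp.tsub_apply, Finsupp.single_apply]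
      simp [coeff_monomial, this, h, hsi]; ring
    · rw [coeff_monomial, coeff_monomial, if_neg h]
      split_ifs with h2
      · rcases Nat.eq_zero_or_pos (s i) with h3 | h3
        · simp [h3]
        · exfalso; apply h
          rw [← h2, tsub_add_cancel_of_le]
          rwa [Finsupp.single_le_iff]
      · ring

/-- the exponent finsupp of the monomial `x0^i x1^j` -/
noncomputable def mn (i j : ℕ) : Fin 2 →₀ ℕ := Finsupp.single 0 i + Finsupp.single 1 j

lemma mn_apply0 (i j : ℕ) : mn i j 0 = i := by simp [mn, Finsupp.single_apply]
lemma mn_apply1 (i j : ℕ) : mn i j 1 = j := by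
  simp [mn, Finsupp.single_apply, (by decide : ¬((0:Fin 2) = 1))]
lemma eq_mn (d : Fin 2 →₀ ℕ) : d = mn (d 0) (d 1) := by
  ext x; fin_cases x
  · simp [mn_apply0]
  · simp [mn_apply1]
lemma mn_add0 (i j : ℕ) : mn i j + Finsupp.single 0 1 = mn (i+1) j := by
  ext x; fin_cases x
  · simp [mn_apply0, Finsupp.single_apply]
  · simp [mn_apply1, Finsupp.single_apply, (by decide : ¬((0:Fin 2) = 1))]
lemma mn_add1 (i j : ℕ) : mn i j + Finsupp.single 1 1 = mn i (j+1) := by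
  ext x; fin_cases x
  · simp [mn_apply0, Finsupp.single_apply, (by decide : ¬((1:Fin 2) = 0))]
  · simp [mn_apply1, Finsupp.single_apply]
lemma single_le_mn0 (n i j : ℕ) : Finsupp.single (0 : Fin 2) n ≤ mn i j ↔ n ≤ i := by
  rw [Finsupp.single_le_iff, mn_apply0]
lemma single_le_mn1 (n i j : ℕ) : Finsupp.single (1 : Fin 2) n ≤ mn i j ↔ n ≤ j := by
  rw [Finsupp.single_le_iff, mn_apply1]
lemma mn_sub0 (n i j : ℕ) : mn i j - Finsupp.single 0 n = mn (i - n) j := by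
  ext x; fin_cases x
  · simp [Finsupp.tsub_apply, mn_apply0, Finsupp.single_apply]
  · simp [Finsupp.tsub_apply, mn_apply1, Finsupp.single_apply,
      (by decide : ¬((0:Fin 2) = 1))]
lemma mn_sub1 (n i j : ℕ) : mn i j - Finsupp.single 1 n = mn i (j - n) := by
  ext x; fin_cases x
  · simp [Finsupp.tsub_apply, mn_apply0, Finsupp.single_apply,
      (by decide : ¬((1:Fin 2) = 0))]
  · simp [Finsupp.tsub_apply, mn_apply1, Finsupp.single_apply]
lemma mn_zero_left (j : ℕ) : mn 0 j = Finsupp.single 1 j := by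
  simp [mn]
section rels
variable {l m : ℕ} {ε : ℝ} {Q : MvPolynomial (Fin 2) ℝ}

lemma Rel1 (hm : 2 ≤ m) (hl : 2 ≤ l)
    (hq : ε • (X 1 ^ (m - 1) * pderiv 0 Q) + X 0 ^ (l - 1) * pderiv 1 Q = 0)
    (i j : ℕ) (hi : 1 ≤ i) :
    ε * i * coeff (mn i j) Q
      + ((j : ℝ) + m) * (if l ≤ i then coeff (mn (i - l) (j + m)) Q else 0) = 0 := by
  obtain ⟨i', rfl⟩ : ∃ i', i = i' + 1 := ⟨i - 1, (Nat.succ_pred_eq_of_pos hi).symm⟩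
  obtain ⟨m', rfl⟩ : ∃ m', m = m' + 1 := ⟨m - 1, (Nat.succ_pred_eq_of_pos (by omega)).symm⟩
  obtain ⟨l', rfl⟩ : ∃ l', l = l' + 1 := ⟨l - 1, (Nat.succ_pred_eq_of_pos (by omega)).symm⟩
  have h := congrArg (coeff (mn i' (j + m'))) hq
  rw [coeff_zero, coeff_add, coeff_smul, X_pow_eq_monomial, X_pow_eq_monomial,
    coeff_monomial_mul', coeff_monomial_mul', Nat.add_sub_cancel, Nat.add_sub_cancel] at h
  simp only [single_le_mn0, single_le_mn1, mn_sub0, mn_sub1, Nat.add_sub_cancel,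
    my_coeff_pderiv, mn_apply0, mn_apply1, mn_add0, mn_add1, one_mul, smul_eq_mul,
    if_pos (le_add_self : m' ≤ j + m')] at h
  rw [Nat.succ_sub_succ]
  have e1 : j + m' + 1 = j + (m' + 1) := rfl
  rw [e1] at h
  by_cases hcase : l' ≤ i'
  · rw [if_pos hcase] at h
    rw [if_pos (by omega : l' + 1 ≤ i' + 1)]
    push_cast at h ⊢
    linarith
  · rw [if_neg hcase] at h
    rw [if_neg (by omega : ¬ (l' + 1 ≤ i' + 1))]
    push_cast at h ⊢
    linarith

lemma Rel2 (hm : 2 ≤ m) (hl : 2 ≤ l)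
    (hq : ε • (X 1 ^ (m - 1) * pderiv 0 Q) + X 0 ^ (l - 1) * pderiv 1 Q = 0)
    (i j : ℕ) (hj : 1 ≤ j) :
    ε * ((i : ℝ) + l) * (if m ≤ j then coeff (mn (i + l) (j - m)) Q else 0)
      + (j : ℝ) * coeff (mn i j) Q = 0 := by
  obtain ⟨j', rfl⟩ : ∃ j', j = j' + 1 := ⟨j - 1, (Nat.succ_pred_eq_of_pos hj).symm⟩
  obtain ⟨m', rfl⟩ : ∃ m', m = m' + 1 := ⟨m - 1, (Nat.succ_pred_eq_of_pos (by omega)).symm⟩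
  obtain ⟨l', rfl⟩ : ∃ l', l = l' + 1 := ⟨l - 1, (Nat.succ_pred_eq_of_pos (by omega)).symm⟩
  have h := congrArg (coeff (mn (i + l') j')) hq
  rw [coeff_zero, coeff_add, coeff_smul, X_pow_eq_monomial, X_pow_eq_monomial,
    coeff_monomial_mul', coeff_monomial_mul', Nat.add_sub_cancel, Nat.add_sub_cancel] at h
  simp only [single_le_mn0, single_le_mn1, mn_sub0, mn_sub1, Nat.add_sub_cancel,
    my_coeff_pderiv, mn_apply0, mn_apply1, mn_add0, mn_add1, one_mul, smul_eq_mul,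
    if_pos (le_add_self : l' ≤ i + l')] at h
  rw [Nat.succ_sub_succ]
  have e1 : i + l' + 1 = i + (l' + 1) := rfl
  rw [e1] at h
  by_cases hcase : m' ≤ j'
  · rw [if_pos hcase] at h
    rw [if_pos (by omega : m' + 1 ≤ j' + 1)]
    push_cast at h ⊢
    linarith
  · rw [if_neg hcase] at h
    rw [if_neg (by omega : ¬ (m' + 1 ≤ j' + 1))]
    push_cast at h ⊢
    linarith

end rels

section kill
variable {l m : ℕ} {ε : ℝ} {Q : MvPolynomial (Fin 2) ℝ}

lemma LemCi (hm : 2 ≤ m) (hl : 2 ≤ l) (hε0 : ε ≠ 0)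
    (hq : ε • (X 1 ^ (m - 1) * pderiv 0 Q) + X 0 ^ (l - 1) * pderiv 1 Q = 0) :
    ∀ i, ¬ l ∣ i → ∀ j, coeff (mn i j) Q = 0 := by
  intro i
  induction i using Nat.strong_induction_on with
  | _ i IH =>
    intro hnd j
    rcases Nat.eq_zero_or_pos i with rfl | hi
    · exact absurd (dvd_zero l) hnd
    have h := Rel1 hm hl hq i j hi
    have hz : (if l ≤ i then coeff (mn (i - l) (j + m)) Q else 0) = 0 := by
      split_ifs with hli
      · refine IH (i - l) (by omega) (fun hd => hnd ?_) (j + m)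
        have : i = (i - l) + l := by omega
        rw [this]; exact hd.add dvd_rfl
      · rfl
    rw [hz, mul_zero, add_zero] at h
    have hne : ε * (i : ℝ) ≠ 0 := mul_ne_zero hε0 (Nat.cast_ne_zero.2 (by omega))
    exact (mul_eq_zero.mp h).resolve_left hne

lemma LemCj (hm : 2 ≤ m) (hl : 2 ≤ l) (hε0 : ε ≠ 0)
    (hq : ε • (X 1 ^ (m - 1) * pderiv 0 Q) + X 0 ^ (l - 1) * pderiv 1 Q = 0) :
    ∀ j, ¬ m ∣ j → ∀ i, coeff (mn i j) Q = 0 := by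
  intro j
  induction j using Nat.strong_induction_on with
  | _ j IH =>
    intro hnd i
    rcases Nat.eq_zero_or_pos j with rfl | hj
    · exact absurd (dvd_zero m) hnd
    have h := Rel2 hm hl hq i j hj
    have hz : (if m ≤ j then coeff (mn (i + l) (j - m)) Q else 0) = 0 := by
      split_ifs with hmj
      · refine IH (j - m) (by omega) (fun hd => hnd ?_) (i + l)
        have : j = (j - m) + m := by omega
        rw [this]; exact hd.add dvd_rfl
      · rfl
    rw [hz, mul_zero, zero_add] at h
    have hne : (j : ℝ) ≠ 0 := Nat.cast_ne_zero.2 (by omega)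
    exact (mul_eq_zero.mp h).resolve_left hne

lemma LemA (hm : 2 ≤ m) (hl : 2 ≤ l) (hε0 : ε ≠ 0)
    (hq : ε • (X 1 ^ (m - 1) * pderiv 0 Q) + X 0 ^ (l - 1) * pderiv 1 Q = 0)
    (h0 : ∀ j, coeff (mn 0 j) Q = 0) : Q = 0 := by
  have key : ∀ i j, coeff (mn i j) Q = 0 := by
    intro i
    induction i using Nat.strong_induction_on with
    | _ i IH =>
      intro j
      rcases Nat.eq_zero_or_pos i with rfl | hi
      · exact h0 j
      have h := Rel1 hm hl hq i j hi
      have hz : (if l ≤ i then coeff (mn (i - l) (j + m)) Q else 0) = 0 := by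
        split_ifs with hli
        · exact IH (i - l) (by omega) (j + m)
        · rfl
      rw [hz, mul_zero, add_zero] at h
      have hne : ε * (i : ℝ) ≠ 0 := mul_ne_zero hε0 (Nat.cast_ne_zero.2 (by omega))
      exact (mul_eq_zero.mp h).resolve_left hne
  rw [MvPolynomial.eq_zero_iff]
  intro d
  rw [eq_mn d]
  exact key _ _

end kill

noncomputable def Hp (l m : ℕ) (ε : ℝ) : MvPolynomial (Fin 2) ℝ :=
  ((l : ℝ)⁻¹ • X 0 ^ l) - (ε * (m : ℝ)⁻¹) • X 1 ^ m

lemma hint_Hp {l m : ℕ} {ε : ℝ} (hm : 2 ≤ m) (hl : 2 ≤ l) :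
    ε • (X 1 ^ (m - 1) * pderiv 0 (Hp l m ε)) + X 0 ^ (l - 1) * pderiv 1 (Hp l m ε) = 0 := by
  have hl0 : (l : ℝ) ≠ 0 := Nat.cast_ne_zero.2 (by omega)
  have hm0 : (m : ℝ) ≠ 0 := Nat.cast_ne_zero.2 (by omega)
  have h1 : pderiv 0 (X (0 : Fin 2) ^ l : MvPolynomial (Fin 2) ℝ)
      = monomial (Finsupp.single 0 (l - 1)) (l : ℝ) := by
    rw [X_pow_eq_monomial, pderiv_monomial]
    congr 1
    · ext x
      simp [Finsupp.tsub_apply, Finsupp.single_apply]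
    · simp [Finsupp.single_apply]
  have h2 : pderiv 0 (X (1 : Fin 2) ^ m : MvPolynomial (Fin 2) ℝ) = 0 := by
    rw [X_pow_eq_monomial, pderiv_monomial]
    simp [Finsupp.single_apply, (by decide : ¬((1:Fin 2) = 0))]
  have h3 : pderiv 1 (X (1 : Fin 2) ^ m : MvPolynomial (Fin 2) ℝ)
      = monomial (Finsupp.single 1 (m - 1)) (m : ℝ) := by
    rw [X_pow_eq_monomial, pderiv_monomial]
    congr 1
    · ext x
      simp [Finsupp.tsub_apply, Finsupp.single_apply]
    · simp [Finsupp.single_apply]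
  have h4 : pderiv 1 (X (0 : Fin 2) ^ l : MvPolynomial (Fin 2) ℝ) = 0 := by
    rw [X_pow_eq_monomial, pderiv_monomial]
    simp [Finsupp.single_apply, (by decide : ¬((0:Fin 2) = 1))]
  rw [Hp, map_sub, map_sub, Derivation.map_smul, Derivation.map_smul,
    Derivation.map_smul, Derivation.map_smul, h1, h2, h3, h4]
  simp only [smul_zero, sub_zero, zero_sub]
  simp only [X_pow_eq_monomial, mul_neg, mul_smul_comm, monomial_mul, smul_monomial,
    smul_smul, one_mul, mul_one]
  rw [add_comm (Finsupp.single (1 : Fin 2) (m - 1)) (Finsupp.single (0 : Fin 2) (l - 1))]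
  rw [← sub_eq_add_neg, sub_eq_zero]
  congr 1
  simp only [smul_eq_mul]; field_simp

lemma hint_pow {l m : ℕ} {ε : ℝ} {Q : MvPolynomial (Fin 2) ℝ}
    (hq : ε • (X 1 ^ (m - 1) * pderiv 0 Q) + X 0 ^ (l - 1) * pderiv 1 Q = 0) (r : ℕ) :
    ε • (X 1 ^ (m - 1) * pderiv 0 (Q ^ r)) + X 0 ^ (l - 1) * pderiv 1 (Q ^ r) = 0 := by
  induction r with
  | zero => simp
  | succ r ih =>
    rw [pow_succ, pderiv_mul, pderiv_mul]
    rw [smul_eq_C_mul] at hq ih ⊢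
    linear_combination Q * ih + Q ^ r * hq

lemma LemF {l m : ℕ} {ε : ℝ} (hm : 2 ≤ m) (hl : 2 ≤ l) (r s : ℕ) :
    coeff (Finsupp.single 1 (m * s)) (Hp l m ε ^ r)
      = if s = r then (-(ε * (m : ℝ)⁻¹)) ^ r else 0 := by
  induction r generalizing s with
  | zero =>
    rcases Nat.eq_zero_or_pos s with rfl | hs
    · simp
    · rw [pow_zero, coeff_one, if_neg, if_neg (by omega)]
      intro h
      have := (Finsupp.single_eq_zero).mp h.symm
      rcases Nat.mul_eq_zero.mp this with h' | h' <;> omega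
  | succ r ih =>
    have hrw : Hp l m ε ^ (r + 1)
        = (l : ℝ)⁻¹ • (X 0 ^ l * Hp l m ε ^ r)
          - (ε * (m : ℝ)⁻¹) • (X 1 ^ m * Hp l m ε ^ r) := by
      rw [pow_succ']
      rw [Hp, sub_mul, smul_mul_assoc, smul_mul_assoc]
    rw [hrw, coeff_sub, coeff_smul, coeff_smul, X_pow_eq_monomial, X_pow_eq_monomial,
      coeff_monomial_mul', coeff_monomial_mul']
    rw [if_neg (by
      rw [Finsupp.single_le_iff]
      simp [Finsupp.single_apply, (by decide : ¬((1:Fin 2) = 0))]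
      omega)]
    rcases Nat.eq_zero_or_pos s with rfl | hs
    · rw [if_neg (by
        rw [Finsupp.single_le_iff]
        simp [Finsupp.single_apply]
        omega)]
      simp [if_neg (by omega : ¬ (0 = r + 1))]
    · rw [if_pos (by
        rw [Finsupp.single_le_iff]
        simp [Finsupp.single_apply]
        exact Nat.le_mul_of_pos_right m hs)]
      rw [← Finsupp.single_tsub]
      obtain ⟨n, rfl⟩ : ∃ n, s = n + 1 := ⟨s - 1, by omega⟩
      have he : m * (n + 1) - m = m * (n + 1 - 1) := by
        rw [Nat.mul_succ, Nat.add_sub_cancel, Nat.add_sub_cancel]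
      rw [he, ih (n + 1 - 1)]
      by_cases hsr : n + 1 = r + 1
      · rw [if_pos (by omega), if_pos hsr, pow_succ]
        simp only [smul_zero, smul_eq_mul, zero_sub]
        ring
      · rw [if_neg (by omega), if_neg hsr]
        simp only [smul_zero, smul_eq_mul, zero_sub]
        ring

lemma weight_mn (w : Fin 2 → ℕ) (i j : ℕ) :
    (Finsupp.weight w) (mn i j) = i * w 0 + j * w 1 := by
  rw [mn, map_add]
  simp [Finsupp.weight_apply, Finsupp.sum_single_index, mul_comm]

/-- Let `l ≥ m ≥ 2`, `d = gcd(l,m)`, and consider the vector field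
`𝓗 = (±x2^{m−1}, x1^{l−1})` with Hamiltonian `H = x1^l/l ∓ x2^m/m`, quasi-homogeneous for
the weight `γ = (m/d, l/d)`. Every quasi-homogeneous polynomial integral `P` of `𝓗`
(i.e. `±x2^{m−1}·∂P/∂x1 + x1^{l−1}·∂P/∂x2 = 0`) is a scalar multiple of a power of `H`. -/
theorem qhp_integral_eq_pow_ham (l m : ℕ) (hm : 2 ≤ m) (hlm : m ≤ l) (ε : ℝ)
    (hε : ε = 1 ∨ ε = -1) (k : ℕ) (P : MvPolynomial (Fin 2) ℝ)
    (hP : P.IsWeightedHomogeneous ![m / Nat.gcd l m, l / Nat.gcd l m] k)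
    (hint : ε • (X 1 ^ (m - 1) * pderiv 0 P) + X 0 ^ (l - 1) * pderiv 1 P = 0) :
    ∃ (c : ℝ) (r : ℕ),
      P = c • (((l : ℝ)⁻¹ • X 0 ^ l : MvPolynomial (Fin 2) ℝ) -
        (ε * (m : ℝ)⁻¹) • X 1 ^ m) ^ r := by
  have hl : 2 ≤ l := le_trans hm hlm
  have hε0 : ε ≠ 0 := by rcases hε with rfl | rfl <;> norm_num
  have hεsq : ε * ε = 1 := by rcases hε with rfl | rfl <;> norm_num
  by_cases hP0 : P = 0
  · exact ⟨0, 0, by simp [hP0]⟩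
  obtain ⟨d0, hd0⟩ := MvPolynomial.ne_zero_iff.mp hP0
  rw [eq_mn d0] at hd0
  have hli : l ∣ d0 0 := by
    by_contra h
    exact hd0 (LemCi hm hl hε0 hint (d0 0) h (d0 1))
  have hmj : m ∣ d0 1 := by
    by_contra h
    exact hd0 (LemCj hm hl hε0 hint (d0 1) h (d0 0))
  obtain ⟨t0, ht0⟩ := hli
  obtain ⟨s0, hs0⟩ := hmj
  set d' := Nat.gcd l m with hd'
  have hdl : d' ∣ l := Nat.gcd_dvd_left l m
  have hdm : d' ∣ m := Nat.gcd_dvd_right l m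
  set g := l * m / d' with hg
  have hlg : l * (m / d') = g := (Nat.mul_div_assoc l hdm).symm
  have hmg : m * (l / d') = g := by
    rw [← Nat.mul_div_assoc m hdl, mul_comm m l]
  have hgpos : 0 < g := by
    refine Nat.div_pos ?_ (Nat.gcd_pos_of_pos_left m (by omega))
    calc d' ≤ l := Nat.le_of_dvd (by omega) hdl
    _ ≤ l * m := Nat.le_mul_of_pos_right l (by omega)
  have hw := hP hd0
  rw [weight_mn] at hw
  simp only [Matrix.cons_val_zero, Matrix.cons_val_one, Matrix.head_cons] at hw
  rw [ht0, hs0] at hw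
  have e1 : l * t0 * (m / d') = t0 * g := by rw [← hlg]; ring
  have e2 : m * s0 * (l / d') = s0 * g := by rw [← hmg]; ring
  have hk : (t0 + s0) * g = k := by
    rw [← hw, e1, e2, Nat.add_mul]
  set r := t0 + s0 with hr
  set A := coeff (mn 0 (m * r)) P with hA
  set c := A * (-(ε * m)) ^ r with hc
  refine ⟨c, r, ?_⟩
  have hH := hint_pow (hint_Hp hm hl (ε := ε)) r
  have hq' : ε • (X 1 ^ (m - 1) * pderiv 0 (P - c • Hp l m ε ^ r))
      + X 0 ^ (l - 1) * pderiv 1 (P - c • Hp l m ε ^ r) = 0 := by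
    rw [map_sub, map_sub, Derivation.map_smul, Derivation.map_smul]
    have h1 := hint
    simp only [smul_eq_C_mul] at h1 hH ⊢
    linear_combination h1 - C c * hH
  have h0 : ∀ j, coeff (mn 0 j) (P - c • Hp l m ε ^ r) = 0 := by
    intro j
    rw [coeff_sub, coeff_smul, smul_eq_mul]
    by_cases hj : m ∣ j
    · obtain ⟨s, rfl⟩ := hj
      rw [mn_zero_left, LemF hm hl r s]
      by_cases hs : s = r
      · subst hs
        rw [if_pos rfl, ← mn_zero_left, ← hA, hc]
        rw [mul_assoc, ← mul_pow]
        have hm0 : (m : ℝ) ≠ 0 := Nat.cast_ne_zero.2 (by omega)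
        have : (-(ε * (m:ℝ))) * (-(ε * (m:ℝ)⁻¹)) = 1 := by
          rw [neg_mul_neg, mul_mul_mul_comm, hεsq, mul_inv_cancel₀ hm0, one_mul]
        rw [this, one_pow, mul_one, sub_self]
      · rw [if_neg hs, mul_zero, sub_zero, ← mn_zero_left]
        by_contra hne
        have hw2 := hP hne
        rw [weight_mn] at hw2
        simp only [Matrix.cons_val_zero, Matrix.cons_val_one, Matrix.head_cons] at hw2
        rw [zero_mul, zero_add] at hw2
        have e3 : m * s * (l / d') = s * g := by rw [← hmg]; ring
        have : s * g = r * g := by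
          rw [hk, ← hw2, e3]
        exact hs (Nat.eq_of_mul_eq_mul_right hgpos this)
    · rw [LemCj hm hl hε0 hint j hj 0, LemCj hm hl hε0 hH j hj 0, mul_zero, sub_zero]
  have hQ := LemA hm hl hε0 hq' h0
  have := sub_eq_zero.mp hQ
  rw [this, Hp]
end

section
/- Let l ≥ m ≥ 2 be integers and R = Σ_{p1,p2≥0} R^{(p1,p2)} x1^{p1} x2^{p2} a polynomial in two variables. Then x2·∂^{l−1}R/∂x1^{l−1} ± x1·∂^{m−1}R/∂x2^{m−1} = 0 holds if and only if for all i,j ≥ 0: R^{(i,m−1)} = 0, R^{(l−1,j)} = 0, and (l−1)!·C(i+l, l−1)·R^{(i+l, j)} ± (m−1)!·C(j+m, m−1)·R^{(i, j+m)} = 0, where C(n,k) denotes the binomial coefficient. Consequently, R^{(i, km−1)} = 0 and R^{(kl−1, j)} = 0 for all k ≥ 1 and all i,j ≥ 0. -/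
open MvPolynomial Finsupp

lemma aux_coeff_pderiv {σ : Type*} [DecidableEq σ] {S : Type*} [CommSemiring S]
    (i : σ) (p : MvPolynomial σ S) (d : σ →₀ ℕ) :
    coeff d (pderiv i p) = (d i + 1 : ℕ) * coeff (d + Finsupp.single i 1) p := by
  induction p using MvPolynomial.induction_on' with
  | add p q hp hq => simp [hp, hq, mul_add]
  | monomial s a =>
    rw [pderiv_monomial, coeff_monomial, coeff_monomial]
    by_cases hs : s i = 0
    · have h1 : s - Finsupp.single i 1 = s := by
        ext j
        rcases eq_or_ne j i with rfl | hj
        · simp [hs]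
        · simp [Finsupp.single_apply, (Ne.symm hj)]
      have h2 : s ≠ d + Finsupp.single i 1 := by
        intro h
        have := congrArg (fun f => f i) h
        simp [hs, Finsupp.single_apply] at this
      rw [h1]
      simp [h2, hs]
    · have hle : Finsupp.single i 1 ≤ s :=
        Finsupp.single_le_iff.mpr (Nat.one_le_iff_ne_zero.mpr hs)
      by_cases hd : s = d + Finsupp.single i 1
      · have h3 : s - Finsupp.single i 1 = d := by
          rw [hd]; exact add_tsub_cancel_right _ _
        have h4 : s i = d i + 1 := by rw [hd]; simp
        simp [h3, hd, h4, mul_comm]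
      · have h3 : s - Finsupp.single i 1 ≠ d := by
          intro h
          exact hd (by rw [← h, tsub_add_cancel_of_le hle])
        simp [h3, hd]

lemma aux_coeff_pderiv_pow {σ : Type*} [DecidableEq σ] {S : Type*} [CommSemiring S]
    (i : σ) (n : ℕ) (p : MvPolynomial σ S) (d : σ →₀ ℕ)
    (hbase : ∀ (q : MvPolynomial σ S) (e : σ →₀ ℕ),
      coeff e (pderiv i q) = (e i + 1 : ℕ) * coeff (e + Finsupp.single i 1) q) :
    coeff d (((pderiv i).toLinearMap ^ n) p)
      = ((∏ k ∈ Finset.range n, (d i + k + 1)) : ℕ) * coeff (d + Finsupp.single i n) p := by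
  induction n generalizing p with
  | zero => simp
  | succ n ih =>
    rw [pow_succ, Module.End.mul_apply]
    have : (pderiv i).toLinearMap p = pderiv i p := rfl
    rw [this, ih (pderiv i p), hbase]
    have h1 : (d + Finsupp.single i n) i = d i + n := by simp
    have h2 : d + Finsupp.single i n + Finsupp.single i 1 = d + Finsupp.single i (n + 1) := by
      rw [add_assoc, Finsupp.single_add]
    rw [h1, h2, Finset.prod_range_succ]
    push_cast
    ring

lemma aux_fact_choose (a n : ℕ) :
    (n.factorial * (a + n).choose n : ℕ) = ∏ k ∈ Finset.range n, (a + k + 1) := by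
  induction n with
  | zero => simp
  | succ n ih =>
    rw [Finset.prod_range_succ, ← ih]
    have h := Nat.add_one_mul_choose_eq (a + n) n
    -- (a+n+1) * (a+n).choose n = (a+n+1).choose (n+1) * (n+1)
    have : (a + n + 1) * (a + n).choose n = (a + n + 1).choose (n + 1) * (n + 1) := by
      simpa [Nat.succ_eq_add_one] using h
    calc (n+1).factorial * (a + (n+1)).choose (n+1)
        = n.factorial * ((n+1) * ((a + n + 1)).choose (n+1)) := by
          rw [Nat.factorial_succ]; ring_nf
      _ = n.factorial * ((a + n + 1) * (a+n).choose n) := by rw [mul_comm (n+1), ← this]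
      _ = n.factorial * (a+n).choose n * (a + n + 1) := by ring

lemma aux_sub1 (a b : ℕ) : (Finsupp.single (0:Fin 2) a + Finsupp.single 1 b) - Finsupp.single 1 1
    = Finsupp.single 0 a + Finsupp.single 1 (b-1) := by
  ext j; fin_cases j <;> simp [Finsupp.single_apply]

lemma aux_sub0 (a b : ℕ) : (Finsupp.single (0:Fin 2) a + Finsupp.single 1 b) - Finsupp.single 0 1
    = Finsupp.single 0 (a-1) + Finsupp.single 1 b := by
  ext j; fin_cases j <;> simp [Finsupp.single_apply]

lemma aux_add0 (a b n : ℕ) : (Finsupp.single (0:Fin 2) a + Finsupp.single 1 b) + Finsupp.single 0 n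
    = Finsupp.single 0 (a+n) + Finsupp.single 1 b := by
  ext j; fin_cases j <;> simp [Finsupp.single_apply]

lemma aux_add1 (a b n : ℕ) : (Finsupp.single (0:Fin 2) a + Finsupp.single 1 b) + Finsupp.single 1 n
    = Finsupp.single 0 a + Finsupp.single 1 (b+n) := by
  ext j; fin_cases j <;> simp [Finsupp.single_apply]

lemma aux_app0 (a b : ℕ) : ((Finsupp.single (0:Fin 2) a + Finsupp.single 1 b) : Fin 2 →₀ ℕ) 0 = a := by
  simp [Finsupp.single_apply]

lemma aux_app1 (a b : ℕ) : ((Finsupp.single (0:Fin 2) a + Finsupp.single 1 b) : Fin 2 →₀ ℕ) 1 = b := by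
  simp [Finsupp.single_apply]

lemma aux_decomp (d : Fin 2 →₀ ℕ) : d = Finsupp.single 0 (d 0) + Finsupp.single 1 (d 1) := by
  ext j; fin_cases j <;> simp [Finsupp.single_apply]

lemma coeff_main (n1 n2 : ℕ) (ε : ℂ) (R : MvPolynomial (Fin 2) ℂ) (a b : ℕ) :
    coeff (Finsupp.single 0 a + Finsupp.single 1 b)
      (X 1 * ((pderiv (0 : Fin 2)).toLinearMap ^ n1) R
        + ε • (X 0 * ((pderiv (1 : Fin 2)).toLinearMap ^ n2) R))
    = (if b = 0 then 0 else ((∏ k ∈ Finset.range n1, (a + k + 1)) : ℕ)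
        * coeff (Finsupp.single 0 (a+n1) + Finsupp.single 1 (b-1)) R)
    + ε * (if a = 0 then 0 else ((∏ k ∈ Finset.range n2, (b + k + 1)) : ℕ)
        * coeff (Finsupp.single 0 (a-1) + Finsupp.single 1 (b+n2)) R) := by
  classical
  rw [coeff_add, coeff_smul, coeff_X_mul', coeff_X_mul', smul_eq_mul]
  congr 1
  · by_cases hb : b = 0
    · subst hb
      rw [if_neg (by simp [Finsupp.mem_support_iff, aux_app1])]
      simp
    · rw [if_pos, if_neg hb, aux_sub1,
        aux_coeff_pderiv_pow _ _ _ _ (fun q e => aux_coeff_pderiv 0 q e),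
        aux_app0, aux_add0]
      exact Finsupp.mem_support_iff.mpr (by rw [aux_app1]; exact hb)
  · congr 1
    by_cases ha : a = 0
    · subst ha
      rw [if_neg (by simp [Finsupp.mem_support_iff, aux_app0])]
      simp
    · rw [if_pos, if_neg ha, aux_sub0,
        aux_coeff_pderiv_pow _ _ _ _ (fun q e => aux_coeff_pderiv 1 q e),
        aux_app1, aux_add1]
      exact Finsupp.mem_support_iff.mpr (by rw [aux_app0]; exact ha)

lemma aux_extract (w z : ℂ) (hw : w ≠ 0) (h : w * z = 0) : z = 0 := by
  rcases mul_eq_zero.mp h with h | h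
  · exact absurd h hw
  · exact h

lemma aux_prod_pos (a n : ℕ) : 0 < ∏ k ∈ Finset.range n, (a + k + 1) :=
  Finset.prod_pos fun k _ => by omega

/-- **resonance equations (17).** Let `l ≥ m ≥ 2` and let `R` be a polynomial
in two variables. Then `x2·∂^{l−1}R/∂x1^{l−1} ± x1·∂^{m−1}R/∂x2^{m−1} = 0` holds iff for all
`i,j ≥ 0`: `R^{(i,m−1)} = 0`, `R^{(l−1,j)} = 0`, and
`(l−1)!·C(i+l,l−1)·R^{(i+l,j)} ± (m−1)!·C(j+m,m−1)·R^{(i,j+m)} = 0`. Consequently, if the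
equation holds then `R^{(i,km−1)} = 0` and `R^{(kl−1,j)} = 0` for all `k ≥ 1`. -/
theorem resonance_coeff_equations (l m : ℕ) (hm : 2 ≤ m) (hlm : m ≤ l) (ε : ℂ)
    (hε : ε = 1 ∨ ε = -1) (R : MvPolynomial (Fin 2) ℂ) :
    ((X 1 * ((pderiv (0 : Fin 2)).toLinearMap ^ (l - 1)) R
        + ε • (X 0 * ((pderiv (1 : Fin 2)).toLinearMap ^ (m - 1)) R) = 0) ↔
      (∀ i : ℕ, R.coeff (Finsupp.single 0 i + Finsupp.single 1 (m - 1)) = 0) ∧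
      (∀ j : ℕ, R.coeff (Finsupp.single 0 (l - 1) + Finsupp.single 1 j) = 0) ∧
      (∀ i j : ℕ,
        ((Nat.factorial (l - 1) : ℂ) * (Nat.choose (i + l) (l - 1) : ℂ)) *
            R.coeff (Finsupp.single 0 (i + l) + Finsupp.single 1 j)
          + ε * (((Nat.factorial (m - 1) : ℂ) * (Nat.choose (j + m) (m - 1) : ℂ)) *
            R.coeff (Finsupp.single 0 i + Finsupp.single 1 (j + m))) = 0)) ∧
    ((X 1 * ((pderiv (0 : Fin 2)).toLinearMap ^ (l - 1)) R
        + ε • (X 0 * ((pderiv (1 : Fin 2)).toLinearMap ^ (m - 1)) R) = 0) →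
      ∀ k : ℕ, 1 ≤ k → ∀ i j : ℕ,
        R.coeff (Finsupp.single 0 i + Finsupp.single 1 (k * m - 1)) = 0 ∧
        R.coeff (Finsupp.single 0 (k * l - 1) + Finsupp.single 1 j) = 0) := by
  have hl2 : 2 ≤ l := le_trans hm hlm
  have hε0 : ε ≠ 0 := by rcases hε with rfl | rfl <;> norm_num
  have key : (X 1 * ((pderiv (0 : Fin 2)).toLinearMap ^ (l - 1)) R
        + ε • (X 0 * ((pderiv (1 : Fin 2)).toLinearMap ^ (m - 1)) R) = 0) ↔
      (∀ i : ℕ, R.coeff (Finsupp.single 0 i + Finsupp.single 1 (m - 1)) = 0) ∧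
      (∀ j : ℕ, R.coeff (Finsupp.single 0 (l - 1) + Finsupp.single 1 j) = 0) ∧
      (∀ i j : ℕ,
        ((Nat.factorial (l - 1) : ℂ) * (Nat.choose (i + l) (l - 1) : ℂ)) *
            R.coeff (Finsupp.single 0 (i + l) + Finsupp.single 1 j)
          + ε * (((Nat.factorial (m - 1) : ℂ) * (Nat.choose (j + m) (m - 1) : ℂ)) *
            R.coeff (Finsupp.single 0 i + Finsupp.single 1 (j + m))) = 0) := by
    constructor
    · intro h
      have hc : ∀ a b : ℕ,
          (if b = 0 then (0:ℂ) else ((∏ k ∈ Finset.range (l-1), (a + k + 1)) : ℕ)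
            * coeff (Finsupp.single 0 (a+(l-1)) + Finsupp.single 1 (b-1)) R)
          + ε * (if a = 0 then 0 else ((∏ k ∈ Finset.range (m-1), (b + k + 1)) : ℕ)
            * coeff (Finsupp.single 0 (a-1) + Finsupp.single 1 (b+(m-1))) R) = 0 := by
        intro a b
        rw [← coeff_main (l-1) (m-1) ε R a b, h, coeff_zero]
      refine ⟨?_, ?_, ?_⟩
      · intro i
        have h0 := hc (i+1) 0
        rw [if_pos rfl, if_neg (Nat.succ_ne_zero i), zero_add,
          show i + 1 - 1 = i by omega, show 0 + (m-1) = m - 1 by omega] at h0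
        exact aux_extract _ _ (Nat.cast_ne_zero.mpr (aux_prod_pos 0 (m-1)).ne')
          (aux_extract _ _ hε0 h0)
      · intro j
        have h0 := hc 0 (j+1)
        rw [if_neg (Nat.succ_ne_zero j), if_pos rfl, mul_zero, add_zero,
          show j + 1 - 1 = j by omega, show 0 + (l-1) = l - 1 by omega] at h0
        exact aux_extract _ _ (Nat.cast_ne_zero.mpr (aux_prod_pos 0 (l-1)).ne') h0
      · intro i j
        have h0 := hc (i+1) (j+1)
        simp only [if_neg (Nat.succ_ne_zero i), if_neg (Nat.succ_ne_zero j),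
          Nat.add_sub_cancel] at h0
        rw [← aux_fact_choose (i+1) (l-1), ← aux_fact_choose (j+1) (m-1)] at h0
        have e1 : i + 1 + (l-1) = i + l := by omega
        have e2 : j + 1 + (m-1) = j + m := by omega
        rw [e1, e2] at h0
        push_cast at h0 ⊢
        linear_combination h0
    · rintro ⟨h1, h2, h3⟩
      rw [MvPolynomial.eq_zero_iff]
      intro d
      obtain ⟨a, b, rfl⟩ : ∃ a b, d = Finsupp.single 0 a + Finsupp.single 1 b :=
        ⟨d 0, d 1, aux_decomp d⟩
      rw [coeff_main]
      obtain _ | i := a <;> obtain _ | j := b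
      · simp
      · rw [if_neg (Nat.succ_ne_zero j), if_pos rfl, mul_zero, add_zero,
          show j + 1 - 1 = j by omega, show 0 + (l-1) = l - 1 by omega, h2 j, mul_zero]
      · rw [if_pos rfl, if_neg (Nat.succ_ne_zero i), zero_add,
          show i + 1 - 1 = i by omega, show 0 + (m-1) = m - 1 by omega, h1 i, mul_zero, mul_zero]
      · simp only [if_neg (Nat.succ_ne_zero i), if_neg (Nat.succ_ne_zero j),
          Nat.add_sub_cancel]
        rw [← aux_fact_choose (i+1) (l-1), ← aux_fact_choose (j+1) (m-1)]
        have e1 : i + 1 + (l-1) = i + l := by omega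
        have e2 : j + 1 + (m-1) = j + m := by omega
        rw [e1, e2]
        have h0 := h3 i j
        push_cast at h0 ⊢
        linear_combination h0
  refine ⟨key, ?_⟩
  intro h
  obtain ⟨h1, h2, h3⟩ := key.mp h
  have H1 : ∀ k, 1 ≤ k → ∀ i,
      R.coeff (Finsupp.single 0 i + Finsupp.single 1 (k * m - 1)) = 0 := by
    intro k hk
    induction k, hk using Nat.le_induction with
    | base => intro i; simpa using h1 i
    | succ k hk ih =>
      intro i
      have h0 := h3 i (k*m - 1)
      rw [ih (i+l), mul_zero, zero_add] at h0
      have hkm : 1 ≤ k * m := Nat.one_le_iff_ne_zero.mpr (by positivity)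
      have hidx : k*m - 1 + m = (k+1)*m - 1 := by rw [add_mul, one_mul]; omega
      rw [hidx] at h0
      have e : (k+1)*m = k*m + m := by ring
      have hcpos : 0 < ((k+1)*m - 1).choose (m-1) := Nat.choose_pos (by omega)
      have hw : ((Nat.factorial (m-1) : ℂ) * (Nat.choose ((k+1)*m - 1) (m-1) : ℂ)) ≠ 0 :=
        mul_ne_zero (Nat.cast_ne_zero.mpr (Nat.factorial_pos _).ne')
          (Nat.cast_ne_zero.mpr hcpos.ne')
      exact aux_extract _ _ hw (aux_extract _ _ hε0 h0)
  have H2 : ∀ k, 1 ≤ k → ∀ j,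
      R.coeff (Finsupp.single 0 (k * l - 1) + Finsupp.single 1 j) = 0 := by
    intro k hk
    induction k, hk using Nat.le_induction with
    | base => intro j; simpa using h2 j
    | succ k hk ih =>
      intro j
      have h0 := h3 (k*l - 1) j
      rw [ih (j+m), mul_zero, mul_zero, add_zero] at h0
      have hkl : 1 ≤ k * l := Nat.one_le_iff_ne_zero.mpr (by positivity)
      have hidx : k*l - 1 + l = (k+1)*l - 1 := by rw [add_mul, one_mul]; omega
      rw [hidx] at h0
      have e : (k+1)*l = k*l + l := by ring
      have hcpos : 0 < ((k+1)*l - 1).choose (l-1) := Nat.choose_pos (by omega)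
      have hw : ((Nat.factorial (l-1) : ℂ) * (Nat.choose ((k+1)*l - 1) (l-1) : ℂ)) ≠ 0 :=
        mul_ne_zero (Nat.cast_ne_zero.mpr (Nat.factorial_pos _).ne')
          (Nat.cast_ne_zero.mpr hcpos.ne')
      exact aux_extract _ _ hw h0
  intro k hk i j
  exact ⟨H1 k hk i, H2 k hk j⟩
end
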